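/- arXiv:1103.0491 — 3 statements merged into one kernel-verified Lean document; each statement's English description precedes it below -/
import Mathlib

section
/- Let (α, u) = (α, u₁, …, u_n) ∈ (0, ∞)^{n+1} be a positive solution of the discrete system (S). If the function g := g₁/g₂ is strictly decreasing on (0, ∞), then the Jacobian matrix J(α, u) is invertible with det(J(α, u)) < 0, and its (n−1)-th principal submatrix (the matrix formed by the first n − 1 rows and first n − 1 columns of J(α, u)) is symmetric and positive definite. -/
open Finset

noncomputable def U (g1 : ℝ → ℝ) (h : ℝ) : ℕ → ℝ → ℝ
  | 0, u => u
  | 1, u => u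
  | 2, u => u + h ^ 2 / 2 * g1 u
  | k + 3, u => 2 * U g1 h (k + 2) u - U g1 h (k + 1) u + h ^ 2 * g1 (U g1 h (k + 2) u)

/-- `(α, u 1, …, u n)` is a positive solution of the discrete system (S). -/
def IsSolution (g1 g2 : ℝ → ℝ) (n : ℕ) (h α : ℝ) (u : ℕ → ℝ) : Prop :=
  (∀ k, 1 ≤ k → k ≤ n → 0 < u k) ∧
  u 2 - u 1 = h ^ 2 / 2 * g1 (u 1) ∧
  (∀ k, 2 ≤ k → k ≤ n - 1 → u (k + 1) - 2 * u k + u (k - 1) = h ^ 2 * g1 (u k)) ∧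
  u n - u (n - 1) + h ^ 2 / 2 * g1 (u n) = h * α * g2 (u n)

/-- The Jacobian matrix `J(α, u)` of the discrete system (S). -/
noncomputable def Jac (g1 g2 : ℝ → ℝ) (n : ℕ) (h α : ℝ) (u : ℕ → ℝ) :
    Matrix (Fin n) (Fin n) ℝ :=
  Matrix.of fun i j =>
    if i = j then
      (if (i : ℕ) = 0 then 1 + h ^ 2 / 2 * deriv g1 (u 1)
       else if (i : ℕ) = n - 1 then 1 + h ^ 2 / 2 * deriv g1 (u n) - h * α * deriv g2 (u n)
       else 2 + h ^ 2 * deriv g1 (u ((i : ℕ) + 1)))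
    else if (i : ℕ) + 1 = (j : ℕ) ∨ (j : ℕ) + 1 = (i : ℕ) then -1 else 0

namespace Stmt16aux

/-! ### Continuants and tridiagonal determinants -/

/-- backward continuant -/
def Kb (c : ℕ → ℝ) : ℕ → ℝ
  | 0 => 1
  | 1 => c 0
  | (m+2) => c (m+1) * Kb c (m+1) - Kb c m

noncomputable def T (c : ℕ → ℝ) (m : ℕ) : Matrix (Fin m) (Fin m) ℝ :=
  Matrix.of fun i j =>
    if i = j then c (i : ℕ)
    else if (i : ℕ) + 1 = (j : ℕ) ∨ (j : ℕ) + 1 = (i : ℕ) then -1 else 0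

lemma Kb_congr : ∀ (m : ℕ) (c c' : ℕ → ℝ), (∀ j < m, c j = c' j) → Kb c m = Kb c' m := by
  intro m
  induction m using Nat.strong_induction_on with
  | _ m ih =>
    match m with
    | 0 => intro c c' _; rfl
    | 1 => intro c c' hc; simp [Kb, hc 0 (by omega)]
    | (m+2) =>
      intro c c' hc
      simp only [Kb]
      rw [ih (m+1) (by omega) c c' (fun j hj => hc j (by omega)),
        ih m (by omega) c c' (fun j hj => hc j (by omega)), hc (m+1) (by omega)]

lemma Kb_front : ∀ (m : ℕ) (c : ℕ → ℝ),
    Kb c (m+2) = c 0 * Kb (fun j => c (j+1)) (m+1) - Kb (fun j => c (j+2)) m := by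
  intro m
  induction m using Nat.strong_induction_on with
  | _ m ih =>
    match m with
    | 0 => intro c; simp [Kb]; ring
    | 1 => intro c; simp [Kb]; ring
    | (m+2) =>
      intro c
      have h1 := ih (m+1) (by omega) c
      have h2 := ih m (by omega) c
      calc Kb c (m+4) = c (m+3) * Kb c (m+3) - Kb c (m+2) := rfl
        _ = c (m+3) * (c 0 * Kb (fun j => c (j+1)) (m+2) - Kb (fun j => c (j+2)) (m+1))
            - (c 0 * Kb (fun j => c (j+1)) (m+1) - Kb (fun j => c (j+2)) m) := by rw [h1, h2]
        _ = c 0 * ((fun j => c (j+1)) (m+2) * Kb (fun j => c (j+1)) (m+2)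
              - Kb (fun j => c (j+1)) (m+1))
            - ((fun j => c (j+2)) (m+1) * Kb (fun j => c (j+2)) (m+1)
              - Kb (fun j => c (j+2)) m) := by simp only []; ring
        _ = c 0 * Kb (fun j => c (j+1)) (m+3) - Kb (fun j => c (j+2)) (m+2) := rfl

lemma T_apply (c : ℕ → ℝ) (m : ℕ) (i j : Fin m) :
    T c m i j = if (i:ℕ) = (j:ℕ) then c (i : ℕ)
      else if (i : ℕ) + 1 = (j : ℕ) ∨ (j : ℕ) + 1 = (i : ℕ) then -1 else 0 := by
  simp [T, Fin.ext_iff]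

lemma det_T_expand (m : ℕ) (c : ℕ → ℝ) :
    (T c (m+2)).det = c 0 * (T (fun j => c (j+1)) (m+1)).det - (T (fun j => c (j+2)) m).det := by
  rw [Matrix.det_succ_column_zero]
  rw [Fin.sum_univ_succ, Fin.sum_univ_succ]
  have h00 : T c (m+2) 0 0 = c 0 := by simp [T_apply]
  have h10 : T c (m+2) (Fin.succ 0) 0 = -1 := by rw [T_apply]; norm_num
  have hrest : ∀ i : Fin m, T c (m+2) i.succ.succ 0 = 0 := by
    intro i
    rw [T_apply]
    have : ((i.succ.succ : Fin (m+2)) : ℕ) = (i:ℕ) + 2 := by simp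
    rw [this]
    simp
  have hM00 : (T c (m+2)).submatrix (Fin.succAbove 0) Fin.succ = T (fun j => c (j+1)) (m+1) := by
    ext i j
    simp only [Matrix.submatrix_apply, Fin.succAbove_zero]
    rw [T_apply, T_apply]
    simp only [Fin.val_succ, add_left_inj]
  have hM10 : ((T c (m+2)).submatrix (Fin.succ 0).succAbove Fin.succ).det
      = -(T (fun j => c (j+2)) m).det := by
    rw [Matrix.det_succ_row_zero]
    rw [Fin.sum_univ_succ]
    have ha : ((Fin.succAbove (Fin.succ 0) 0 : Fin (m+2)) : ℕ) = 0 := by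
      norm_num [Fin.succAbove, Fin.lt_def]
    have e0 : (T c (m+2)).submatrix (Fin.succ 0).succAbove Fin.succ 0 0 = -1 := by
      simp only [Matrix.submatrix_apply]
      rw [T_apply, ha]
      norm_num
    have erest : ∀ j : Fin m,
        (T c (m+2)).submatrix (Fin.succ 0).succAbove Fin.succ 0 j.succ = 0 := by
      intro j
      simp only [Matrix.submatrix_apply]
      rw [T_apply, ha]
      have h2 : ((j.succ.succ : Fin (m+2)) : ℕ) = (j:ℕ) + 2 := by simp
      rw [h2]
      simp
    have hsub : ((T c (m+2)).submatrix (Fin.succ 0).succAbove Fin.succ).submatrix Fin.succ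
        (Fin.succAbove 0) = T (fun j => c (j+2)) m := by
      ext i j
      simp only [Matrix.submatrix_apply, Fin.succAbove_zero]
      rw [T_apply, T_apply]
      have h1 : ((Fin.succAbove (Fin.succ 0) i.succ : Fin (m+2)) : ℕ) = (i:ℕ) + 2 := by
        simp [Fin.succAbove, Fin.lt_def]
      have h2 : ((j.succ.succ : Fin (m+2)) : ℕ) = (j:ℕ) + 2 := by simp
      rw [h1, h2]
      split_ifs <;> first | rfl | (exfalso; omega)
    rw [e0]
    simp only [erest, mul_zero, zero_mul, Finset.sum_const_zero, add_zero]
    rw [hsub]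
    simp
  rw [h00, h10, hM00, hM10]
  simp only [hrest, mul_zero, zero_mul, Finset.sum_const_zero, add_zero]
  simp [Fin.val_succ]
  ring

lemma det_T : ∀ (m : ℕ) (c : ℕ → ℝ), (T c m).det = Kb c m := by
  intro m
  induction m using Nat.strong_induction_on with
  | _ m ih =>
    match m with
    | 0 => intro c; simp [Kb, Matrix.det_fin_zero]
    | 1 => intro c; rw [Matrix.det_fin_one]; simp [Kb, T]
    | (m+2) =>
      intro c
      rw [det_T_expand, Kb_front, ih (m+1) (by omega), ih m (by omega)]

/-! ### Quadratic form of the tridiagonal matrix -/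

def E (c : ℕ → ℝ) (i j : ℕ) : ℝ :=
  if i = j then c i else if i + 1 = j ∨ j + 1 = i then -1 else 0

def S (c : ℕ → ℝ) (y : ℕ → ℝ) (m : ℕ) : ℝ :=
  ∑ i ∈ range m, ∑ j ∈ range m, E c i j * y i * y j

lemma E_symm (c : ℕ → ℝ) (i j : ℕ) : E c i j = E c j i := by
  unfold E
  split_ifs <;> first | rfl | (exfalso; omega) | (rename_i h _; rw [h])

lemma rowsum (c : ℕ → ℝ) (y : ℕ → ℝ) (m : ℕ) (hm : 1 ≤ m) :
    ∑ j ∈ range m, E c m j * y j = -(y (m-1)) := by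
  rw [Finset.sum_eq_single (m-1)]
  · have h1 : E c m (m-1) = -1 := by unfold E; split_ifs <;> first | rfl | (exfalso; omega)
    rw [h1]; ring
  · intro b hb hne
    have hb' : b < m := Finset.mem_range.mp hb
    have : E c m b = 0 := by unfold E; split_ifs <;> first | rfl | (exfalso; omega)
    rw [this]; ring
  · intro hmem; exact absurd (Finset.mem_range.mpr (by omega)) hmem

lemma S_one (c : ℕ → ℝ) (y : ℕ → ℝ) : S c y 1 = c 0 * y 0 ^ 2 := by
  simp [S, E]; ring

lemma S_succ (c : ℕ → ℝ) (y : ℕ → ℝ) (m : ℕ) (hm : 1 ≤ m) :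
    S c y (m+1) = S c y m + c m * y m ^ 2 - 2 * y m * y (m-1) := by
  unfold S
  rw [Finset.sum_range_succ]
  have hinner : ∀ i, ∑ j ∈ range (m+1), E c i j * y i * y j
      = (∑ j ∈ range m, E c i j * y i * y j) + E c i m * y i * y m := by
    intro i; rw [Finset.sum_range_succ]
  simp only [hinner]
  rw [Finset.sum_add_distrib]
  have hcol : ∑ i ∈ range m, E c i m * y i * y m
      = -(y (m-1)) * y m := by
    rw [← Finset.sum_mul]
    congr 1
    calc ∑ i ∈ range m, E c i m * y i = ∑ i ∈ range m, E c m i * y i := by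
          apply Finset.sum_congr rfl; intro i _; rw [E_symm]
      _ = -(y (m-1)) := rowsum c y m hm
  have hrow : ∑ j ∈ range m, E c m j * y m * y j = y m * (-(y (m-1))) := by
    rw [← rowsum c y m hm, Finset.mul_sum]
    apply Finset.sum_congr rfl; intro j _; ring
  have hdiag : E c m m * y m * y m = c m * y m ^ 2 := by unfold E; simp; ring
  rw [hcol, hrow, hdiag]
  ring

lemma S_lower (c : ℕ → ℝ) (y : ℕ → ℝ) :
    ∀ m, 1 ≤ m →
      (∑ i ∈ range m, (if i = 0 then c 0 - 1 else c i - 2) * y i ^ 2) + y (m-1) ^ 2 ≤ S c y m := by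
  intro m hm
  induction m, hm using Nat.le_induction with
  | base => rw [S_one]; simp [range_one]; ring_nf; simp
  | succ m hm ih =>
    rw [S_succ c y m hm, Finset.sum_range_succ]
    have hne : ¬(m = 0) := by omega
    simp only [hne, if_false]
    have h1 : (0:ℝ) ≤ (y (m-1) - y m)^2 := sq_nonneg _
    have : m + 1 - 1 = m := by omega
    rw [this]
    nlinarith [ih]

lemma T_apply_E (c : ℕ → ℝ) (m : ℕ) (i j : Fin m) : T c m i j = E c (i:ℕ) (j:ℕ) := by
  rw [T_apply]; rfl

lemma T_symm_apply (c : ℕ → ℝ) (m : ℕ) (i j : Fin m) : T c m j i = T c m i j := by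
  rw [T_apply_E, T_apply_E]
  unfold E
  split_ifs <;> first | rfl | (exfalso; omega) | (rename_i h _; rw [h])

lemma T_isSymm (c : ℕ → ℝ) (m : ℕ) : (T c m).IsSymm := by
  unfold Matrix.IsSymm
  ext i j
  rw [Matrix.transpose_apply, T_symm_apply]

lemma T_isHermitian (c : ℕ → ℝ) (m : ℕ) : (T c m).IsHermitian := by
  unfold Matrix.IsHermitian
  ext i j
  rw [Matrix.conjTranspose_apply, T_symm_apply, star_trivial]

lemma quad_eq (c : ℕ → ℝ) (m : ℕ) (x : Fin m → ℝ) :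
    dotProduct (star x) ((T c m).mulVec x)
      = S c (fun j => if h : j < m then x ⟨j, h⟩ else 0) m := by
  set y : ℕ → ℝ := fun j => if h : j < m then x ⟨j, h⟩ else 0 with hy
  have hyx : ∀ i : Fin m, x i = y (i : ℕ) := by
    intro i; rw [hy]; simp [Fin.is_lt]
  rw [star_trivial]
  unfold dotProduct Matrix.mulVec
  unfold S
  rw [← Fin.sum_univ_eq_sum_range (fun i => ∑ j ∈ range m, E c i j * y i * y j) m]
  apply Finset.sum_congr rfl
  intro i _
  rw [← Fin.sum_univ_eq_sum_range (fun j => E c (i:ℕ) j * y (i:ℕ) * y j) m]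
  unfold dotProduct
  rw [Finset.mul_sum]
  apply Finset.sum_congr rfl
  intro j _
  simp only []
  rw [T_apply_E, hyx i, hyx j]
  ring

lemma T_posDef (c : ℕ → ℝ) (m : ℕ) (hm : 1 ≤ m)
    (hc : ∀ i < m, 0 < (if i = 0 then c 0 - 1 else c i - 2)) : (T c m).PosDef := by
  refine Matrix.PosDef.of_dotProduct_mulVec_pos (T_isHermitian c m) (fun x hx => ?_)
  rw [quad_eq]
  set y : ℕ → ℝ := fun j => if h : j < m then x ⟨j, h⟩ else 0 with hy
  have hb := S_lower c y m hm
  have hpos : 0 < ∑ i ∈ range m, (if i = 0 then c 0 - 1 else c i - 2) * y i ^ 2 := by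
    obtain ⟨i0, hi0⟩ := Function.ne_iff.mp hx
    apply Finset.sum_pos'
    · intro i hi
      exact mul_nonneg (le_of_lt (hc i (Finset.mem_range.mp hi))) (sq_nonneg _)
    · refine ⟨(i0 : ℕ), Finset.mem_range.mpr i0.isLt, ?_⟩
      have hyy : y (i0:ℕ) = x i0 := by rw [hy]; simp [i0.isLt]
      have hne : y (i0:ℕ) ≠ 0 := by rw [hyy]; exact hi0
      exact mul_pos (hc _ i0.isLt) (by positivity)
  linarith [sq_nonneg (y (m-1))]

/-! ### Calculus facts -/

variable {g : ℝ → ℝ}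

lemma pos_of_g (hgC : ContDiff ℝ 3 g) (hg0 : g 0 = 0)
    (hd : ∀ x > 0, 0 < deriv g x) : ∀ x > 0, 0 < g x := by
  intro x hx
  have hmono : StrictMonoOn g (Set.Ici 0) :=
    strictMonoOn_of_deriv_pos (convex_Ici 0) hgC.continuous.continuousOn
      (fun y hy => hd y (by simpa using hy))
  have := hmono (Set.self_mem_Ici) (Set.mem_Ici.mpr hx.le) hx
  simpa [hg0] using this

lemma deriv_strictMono (hgC : ContDiff ℝ 3 g)
    (hd2 : ∀ x > 0, 0 < iteratedDeriv 2 g x) : StrictMonoOn (deriv g) (Set.Ioi 0) := by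
  have hc : Continuous (deriv g) := hgC.continuous_deriv (by norm_num)
  refine strictMonoOn_of_deriv_pos (convex_Ioi 0) hc.continuousOn (fun y hy => ?_)
  rw [interior_Ioi] at hy
  have : deriv (deriv g) y = iteratedDeriv 2 g y := by
    rw [iteratedDeriv_succ, iteratedDeriv_one]
  rw [this]
  exact hd2 y hy

lemma tangent_strict (hgC : ContDiff ℝ 3 g) (hd2 : ∀ x > 0, 0 < iteratedDeriv 2 g x)
    {s t : ℝ} (hs : 0 < s) (hst : s < t) : g t - g s < deriv g t * (t - s) := by
  obtain ⟨ξ, hξ, hslope⟩ := exists_deriv_eq_slope g hst hgC.continuous.continuousOn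
    (hgC.differentiable (by norm_num)).differentiableOn
  have h1 : deriv g ξ < deriv g t :=
    deriv_strictMono hgC hd2 (by exact lt_trans hs hξ.1) (lt_trans hs hst) hξ.2
  have ht : 0 < t - s := by linarith
  have : (g t - g s) / (t - s) < deriv g t := by rw [← hslope]; exact h1
  calc g t - g s = (g t - g s) / (t - s) * (t - s) := by field_simp
    _ < deriv g t * (t - s) := by exact mul_lt_mul_of_pos_right this ht

lemma cross_nonpos {g1 g2 : ℝ → ℝ} (hg1C : ContDiff ℝ 3 g1) (hg2C : ContDiff ℝ 3 g2)
    (hg2pos : ∀ x > 0, 0 < g2 x)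
    (hdec : StrictAntiOn (fun x => g1 x / g2 x) (Set.Ioi 0)) :
    ∀ x > 0, deriv g1 x * g2 x ≤ g1 x * deriv g2 x := by
  intro x hx
  have hg2x : g2 x ≠ 0 := ne_of_gt (hg2pos x hx)
  have hD : HasDerivAt (fun y => g1 y / g2 y)
      ((deriv g1 x * g2 x - g1 x * deriv g2 x) / g2 x ^ 2) x :=
    ((hg1C.differentiable (by norm_num) x).hasDerivAt).div
      ((hg2C.differentiable (by norm_num) x).hasDerivAt) hg2x
  have htend : Filter.Tendsto (slope (fun y => g1 y / g2 y) x) (nhdsWithin x (Set.Ioi x))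
      (nhds ((deriv g1 x * g2 x - g1 x * deriv g2 x) / g2 x ^ 2)) :=
    (hasDerivAt_iff_tendsto_slope.mp hD).mono_left
      (nhdsWithin_mono x (fun y hy => ne_of_gt hy))
  have hle : (deriv g1 x * g2 x - g1 x * deriv g2 x) / g2 x ^ 2 ≤ 0 := by
    refine le_of_tendsto htend ?_
    filter_upwards [self_mem_nhdsWithin] with y hy
    rw [slope_def_field]
    have hyx : x < y := hy
    have : g1 y / g2 y < g1 x / g2 x := hdec hx (lt_trans hx hyx) hyx
    apply div_nonpos_of_nonpos_of_nonneg <;> [linarith; linarith]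
  have h2 : (0:ℝ) < g2 x ^ 2 := by positivity
  rcases div_nonpos_iff.mp hle with ⟨h1', h2'⟩ | ⟨h1', h2'⟩ <;> nlinarith

/-! ### The key algebraic step inequality -/

lemma step_ineq (P1 P1' Q1 Q1' P2 P2' Q2 Q2' e s t v w A B : ℝ)
    (he : 0 < e) (hv : 0 < v) (hA : 0 ≤ A) (hB : 0 ≤ B)
    (hP1 : 0 < P1) (hP1' : 0 < P1')
    (ha : t - s = A + e * P1) (hb : w - v = B + e * P1' * v)
    (X1 : P1' * Q1 ≤ P1 * Q1') (X2 : P2' * Q2 ≤ P2 * Q2')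
    (Mono : Q1' ≤ Q2') (Tan : Q2 - Q1 < Q2' * (t - s)) :
    0 < w ∧
    ((w - v) + e * P2' * w) * Q2 - ((t - s) + e * P2) * Q2' * w < B * Q1 - A * Q1' * v := by
  have hb0 : 0 ≤ w - v := by nlinarith [mul_pos (mul_pos he hP1') hv]
  have hw : 0 < w := by linarith
  refine ⟨hw, ?_⟩
  have k1 : e * P2' * w * Q2 - e * P2 * Q2' * w ≤ 0 := by
    nlinarith [mul_le_mul_of_nonneg_left X2 (mul_pos he hw).le]
  have k2 : B * Q2 ≤ B * Q1 + B * (Q2' * (t - s)) := by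
    nlinarith [mul_le_mul_of_nonneg_left (le_of_lt Tan) hB]
  have k3 : e * P1' * v * Q2 < e * P1' * v * Q1 + e * P1' * v * (Q2' * (t - s)) := by
    nlinarith [mul_lt_mul_of_pos_left Tan (by positivity : (0:ℝ) < e * P1' * v)]
  have k4 : e * P1' * v * Q1 ≤ e * v * P1 * Q2' := by
    nlinarith [mul_le_mul_of_nonneg_left X1 (by positivity : (0:ℝ) ≤ e * v),
      mul_le_mul_of_nonneg_left Mono (by positivity : (0:ℝ) ≤ e * v * P1)]
  have k5 : B * Q1 + B * (Q2' * (t - s)) + e * v * P1 * Q2' + e * P1' * v * (Q2' * (t - s))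
      - (t - s) * Q2' * w = B * Q1 - A * Q2' * v := by
    linear_combination (-(Q2') * (t - s)) * hb + (-(Q2') * v) * ha
  have k6 : A * Q1' * v ≤ A * Q2' * v := by
    nlinarith [mul_le_mul_of_nonneg_left Mono (mul_nonneg hA hv.le)]
  have expand : ((w - v) + e * P2' * w) * Q2 - ((t - s) + e * P2) * Q2' * w
      = B * Q2 + e * P1' * v * Q2 + (e * P2' * w * Q2 - e * P2 * Q2' * w)
        - (t - s) * Q2' * w := by linear_combination Q2 * hb
  linarith [k1, k2, k3, k4, k5, k6, expand]

/-! ### Sequences attached to a solution -/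

noncomputable def vseq (g1 : ℝ → ℝ) (h : ℝ) (u : ℕ → ℝ) : ℕ → ℝ
  | 0 => 1
  | 1 => 1 + h^2/2 * deriv g1 (u 1)
  | (m+2) => (2 + h^2 * deriv g1 (u (m+2))) * vseq g1 h u (m+1) - vseq g1 h u m

noncomputable def AS (g1 : ℝ → ℝ) (h : ℝ) (u : ℕ → ℝ) (k : ℕ) : ℝ :=
  if k = 1 then 0 else (u k - u (k-1)) + h^2/2 * g1 (u k)

noncomputable def BS (g1 : ℝ → ℝ) (h : ℝ) (u : ℕ → ℝ) (k : ℕ) : ℝ :=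
  if k = 1 then 0 else
    (vseq g1 h u (k-1) - vseq g1 h u (k-2)) + h^2/2 * deriv g1 (u k) * vseq g1 h u (k-1)

noncomputable def gam (g1 : ℝ → ℝ) (h : ℝ) (u : ℕ → ℝ) : ℕ → ℝ := fun j =>
  if j = 0 then 1 + h^2/2 * deriv g1 (u 1) else 2 + h^2 * deriv g1 (u (j+1))

lemma Kb_gam (g1 : ℝ → ℝ) (h : ℝ) (u : ℕ → ℝ) :
    ∀ m, Kb (gam g1 h u) m = vseq g1 h u m := by
  intro m
  induction m using Nat.strong_induction_on with
  | _ m ih =>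
    match m with
    | 0 => rfl
    | 1 => simp [Kb, gam, vseq]
    | (m+2) =>
      show gam g1 h u (m+1) * Kb (gam g1 h u) (m+1) - Kb (gam g1 h u) m = _
      rw [ih (m+1) (by omega), ih m (by omega)]
      have : gam g1 h u (m+1) = 2 + h^2 * deriv g1 (u (m+2)) := by simp [gam]
      rw [this]
      rfl

lemma invariant (g1 g2 : ℝ → ℝ) (n : ℕ) (h α : ℝ) (u : ℕ → ℝ)
    (hn : 2 ≤ n) (he : 0 < h^2/2)
    (hsol : IsSolution g1 g2 n h α u)
    (hg1pos : ∀ x > 0, 0 < g1 x)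
    (hg1d1 : ∀ x > 0, 0 < deriv g1 x)
    (X : ∀ x > 0, deriv g1 x * g2 x ≤ g1 x * deriv g2 x)
    (Mono : ∀ s t : ℝ, 0 < s → s ≤ t → deriv g2 s ≤ deriv g2 t)
    (Tan : ∀ s t : ℝ, 0 < s → s < t → g2 t - g2 s < deriv g2 t * (t - s)) :
    ∀ k, 1 ≤ k → k ≤ n →
      0 ≤ AS g1 h u k ∧ 0 ≤ BS g1 h u k ∧ 0 < vseq g1 h u (k-1) ∧
      (BS g1 h u k * g2 (u k) - AS g1 h u k * deriv g2 (u k) * vseq g1 h u (k-1) ≤ 0) ∧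
      (2 ≤ k →
        BS g1 h u k * g2 (u k) - AS g1 h u k * deriv g2 (u k) * vseq g1 h u (k-1) < 0) := by
  intro k hk
  induction k, hk using Nat.le_induction with
  | base =>
    intro _
    refine ⟨le_of_eq rfl.symm ,le_of_eq rfl.symm, ?_, ?_, by omega⟩
    · simp [vseq]
    · simp [AS, BS]
  | succ k hk ih =>
    intro hk1n
    obtain ⟨hA, hB, hv, hφ, _⟩ := ih (by omega)
    have hs : 0 < u k := hsol.1 k hk (by omega)
    have ht : 0 < u (k+1) := hsol.1 (k+1) (by omega) hk1n
    have hts : u (k+1) - u k = AS g1 h u k + h^2/2 * g1 (u k) := by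
      rcases Nat.eq_or_lt_of_le hk with h1 | h2
      · have hk1 : k = 1 := h1.symm
        subst hk1
        have e0 : AS g1 h u 1 = 0 := by simp [AS]
        rw [e0]
        have := hsol.2.1
        norm_num
        linarith
      · have hk2 : 2 ≤ k := h2
        have heq := hsol.2.2.1 k hk2 (by omega)
        have hne : ¬(k = 1) := by omega
        simp only [AS, if_neg hne]
        linarith
    have hwv : vseq g1 h u k - vseq g1 h u (k-1)
        = BS g1 h u k + h^2/2 * deriv g1 (u k) * vseq g1 h u (k-1) := by
      rcases Nat.eq_or_lt_of_le hk with h1 | h2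
      · have hk1 : k = 1 := h1.symm
        subst hk1
        have e0 : BS g1 h u 1 = 0 := by simp [BS]
        rw [e0]
        simp only [vseq]
        norm_num [vseq]
      · obtain ⟨j, rfl⟩ : ∃ j, k = j + 2 := ⟨k - 2, by omega⟩
        have hne : ¬(j + 2 = 1) := by omega
        simp only [BS, if_neg hne]
        have hrec : vseq g1 h u (j+2)
            = (2 + h^2 * deriv g1 (u (j+2))) * vseq g1 h u (j+1) - vseq g1 h u j := rfl
        have e1 : j + 2 - 1 = j + 1 := rfl
        have e2 : j + 2 - 2 = j := rfl
        rw [e1, e2, hrec]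
        ring
    have hstep := step_ineq (g1 (u k)) (deriv g1 (u k)) (g2 (u k)) (deriv g2 (u k))
      (g1 (u (k+1))) (deriv g1 (u (k+1))) (g2 (u (k+1))) (deriv g2 (u (k+1)))
      (h^2/2) (u k) (u (k+1)) (vseq g1 h u (k-1)) (vseq g1 h u k)
      (AS g1 h u k) (BS g1 h u k) he hv hA hB (hg1pos _ hs) (hg1d1 _ hs) hts hwv
      (X _ hs) (X _ ht)
      (Mono _ _ hs (by nlinarith [hg1pos _ hs, mul_pos he (hg1pos _ hs)]))
      (Tan _ _ hs (by nlinarith [hg1pos _ hs, mul_pos he (hg1pos _ hs)]))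
    obtain ⟨hw, hlt⟩ := hstep
    have hASk1 : AS g1 h u (k+1) = (u (k+1) - u k) + h^2/2 * g1 (u (k+1)) := by
      have hne : ¬(k + 1 = 1) := by omega
      simp only [AS, if_neg hne, Nat.add_sub_cancel]
    have hBSk1 : BS g1 h u (k+1)
        = (vseq g1 h u k - vseq g1 h u (k-1)) + h^2/2 * deriv g1 (u (k+1)) * vseq g1 h u k := by
      have hne : ¬(k + 1 = 1) := by omega
      have e1 : k + 1 - 1 = k := rfl
      have e2 : k + 1 - 2 = k - 1 := by omega
      simp only [BS, if_neg hne, e1, e2]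
    have hφ1 : BS g1 h u (k+1) * g2 (u (k+1))
        - AS g1 h u (k+1) * deriv g2 (u (k+1)) * vseq g1 h u k < 0 := by
      rw [hASk1, hBSk1]
      calc ((vseq g1 h u k - vseq g1 h u (k-1)) + h^2/2 * deriv g1 (u (k+1)) * vseq g1 h u k)
            * g2 (u (k+1))
          - ((u (k+1) - u k) + h^2/2 * g1 (u (k+1))) * deriv g2 (u (k+1)) * vseq g1 h u k
          < BS g1 h u k * g2 (u k)
            - AS g1 h u k * deriv g2 (u k) * vseq g1 h u (k-1) := hlt
        _ ≤ 0 := hφ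
    refine ⟨?_, ?_, by rwa [Nat.add_sub_cancel], le_of_lt hφ1, fun _ => hφ1⟩
    · rw [hASk1, hts]
      nlinarith [mul_pos he (hg1pos _ hs), mul_pos he (hg1pos _ ht)]
    · rw [hBSk1, hwv]
      nlinarith [mul_pos (mul_pos he (hg1d1 _ hs)) hv, mul_pos (mul_pos he (hg1d1 _ ht)) hw]

end Stmt16aux

open Stmt16aux in
theorem stmt16
    (g1 g2 : ℝ → ℝ)
    (hg1C : ContDiff ℝ 3 g1) (hg2C : ContDiff ℝ 3 g2)
    (hg1A : AnalyticAt ℝ g1 0) (hg2A : AnalyticAt ℝ g2 0)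
    (hg10 : g1 0 = 0) (hg20 : g2 0 = 0)
    (hg1d1 : ∀ x > 0, 0 < deriv g1 x) (hg2d1 : ∀ x > 0, 0 < deriv g2 x)
    (hg1d2 : ∀ x > 0, 0 < iteratedDeriv 2 g1 x) (hg2d2 : ∀ x > 0, 0 < iteratedDeriv 2 g2 x)
    (hg1d3 : ∀ x > 0, 0 ≤ iteratedDeriv 3 g1 x) (hg2d3 : ∀ x > 0, 0 ≤ iteratedDeriv 3 g2 x)
    (n : ℕ) (hn : 2 ≤ n) (h : ℝ) (hh : h = 1 / ((n : ℝ) - 1))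
    (α : ℝ) (hα : 0 < α) (u : ℕ → ℝ)
    (hsol : IsSolution g1 g2 n h α u)
    (hdec : StrictAntiOn (fun x => g1 x / g2 x) (Set.Ioi 0)) :
    IsUnit (Jac g1 g2 n h α u) ∧ (Jac g1 g2 n h α u).det < 0 ∧
    ((Jac g1 g2 n h α u).submatrix (Fin.castLE (Nat.sub_le n 1))
        (Fin.castLE (Nat.sub_le n 1))).IsSymm ∧
    ((Jac g1 g2 n h α u).submatrix (Fin.castLE (Nat.sub_le n 1))
        (Fin.castLE (Nat.sub_le n 1))).PosDef := by
  -- positivity of h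
  have hnR : (2:ℝ) ≤ (n:ℝ) := by exact_mod_cast hn
  have hhpos : 0 < h := by rw [hh]; apply div_pos one_pos; linarith
  have he : 0 < h^2/2 := by positivity
  -- basic calculus facts
  have hg1pos := pos_of_g hg1C hg10 hg1d1
  have hg2pos := pos_of_g hg2C hg20 hg2d1
  have X := cross_nonpos hg1C hg2C hg2pos hdec
  have hdsm := deriv_strictMono hg2C hg2d2
  have Mono : ∀ s t : ℝ, 0 < s → s ≤ t → deriv g2 s ≤ deriv g2 t := by
    intro s t hs hst
    rcases eq_or_lt_of_le hst with rfl | hlt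
    · exact le_refl _
    · exact le_of_lt (hdsm hs (hs.trans hlt) hlt)
  have Tan : ∀ s t : ℝ, 0 < s → s < t → g2 t - g2 s < deriv g2 t * (t - s) :=
    fun s t hs hst => tangent_strict hg2C hg2d2 hs hst
  have inv := invariant g1 g2 n h α u hn he hsol hg1pos hg1d1 X Mono Tan
  -- the diagonal sequence
  set Γc : ℕ → ℝ := fun j =>
    if j = 0 then 1 + h ^ 2 / 2 * deriv g1 (u 1)
    else if j = n - 1 then 1 + h ^ 2 / 2 * deriv g1 (u n) - h * α * deriv g2 (u n)
    else 2 + h ^ 2 * deriv g1 (u (j + 1)) with hΓc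
  have hJT : Jac g1 g2 n h α u = T Γc n := by
    ext i j
    simp only [Jac, T, Matrix.of_apply, hΓc]
  obtain ⟨m2, rfl⟩ : ∃ m2, n = m2 + 2 := ⟨n - 2, by omega⟩
  have hn1 : m2 + 2 - 1 = m2 + 1 := rfl
  -- agreement of Γc and gam below n-1
  have hagree : ∀ j < m2 + 1, Γc j = gam g1 h u j := by
    intro j hj
    rw [hΓc]
    unfold gam
    rcases Nat.eq_zero_or_pos j with rfl | hj0
    · norm_num
    · have h1 : ¬(j = 0) := by omega
      have h2 : ¬(j = m2 + 2 - 1) := by omega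
      simp only [h1, h2, if_neg, if_false]
  have hKb1 : Kb Γc (m2 + 1) = vseq g1 h u (m2 + 1) := by
    rw [Kb_congr (m2+1) Γc (gam g1 h u) hagree, Kb_gam]
  have hKb0 : Kb Γc m2 = vseq g1 h u m2 := by
    rw [Kb_congr m2 Γc (gam g1 h u) (fun j hj => hagree j (by omega)), Kb_gam]
  -- determinant formula
  have hdetJ : (Jac g1 g2 (m2+2) h α u).det
      = Γc (m2 + 1) * vseq g1 h u (m2 + 1) - vseq g1 h u m2 := by
    rw [hJT, det_T]
    show Γc (m2+1) * Kb Γc (m2+1) - Kb Γc m2 = _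
    rw [hKb1, hKb0]
  have hΓlast : Γc (m2 + 1) = 1 + h ^ 2 / 2 * deriv g1 (u (m2+2))
      - h * α * deriv g2 (u (m2+2)) := by
    rw [hΓc]
    have h1 : ¬(m2 + 1 = 0) := by omega
    have h2 : m2 + 1 = m2 + 2 - 1 := rfl
    simp only [h1, if_neg, if_false, if_pos h2]
  -- the key negativity
  obtain ⟨hAn, hBn, hvn, hφn, hφns⟩ := inv (m2+2) (by omega) le_rfl
  have hφlt := hφns (by omega)
  have hun : 0 < u (m2+2) := hsol.1 (m2+2) (by omega) le_rfl
  have hg2un : 0 < g2 (u (m2+2)) := hg2pos _ hun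
  have hbd := hsol.2.2.2
  have hASn : AS g1 h u (m2+2) = (u (m2+2) - u (m2+1)) + h^2/2 * g1 (u (m2+2)) := by
    have hne : ¬(m2 + 2 = 1) := by omega
    simp only [AS, if_neg hne]
    norm_num
  have hBSn : BS g1 h u (m2+2) = (vseq g1 h u (m2+1) - vseq g1 h u m2)
      + h^2/2 * deriv g1 (u (m2+2)) * vseq g1 h u (m2+1) := by
    have hne : ¬(m2 + 2 = 1) := by omega
    simp only [BS, if_neg hne]
    norm_num
  have hvn' : 0 < vseq g1 h u (m2+1) := by
    have := hvn
    norm_num at this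
    exact this
  have hdetneg : (Jac g1 g2 (m2+2) h α u).det < 0 := by
    have hkey : (Jac g1 g2 (m2+2) h α u).det * g2 (u (m2+2))
        = BS g1 h u (m2+2) * g2 (u (m2+2))
          - AS g1 h u (m2+2) * deriv g2 (u (m2+2)) * vseq g1 h u (m2+1) := by
      rw [hdetJ, hΓlast, hASn, hBSn]
      have hbd' : u (m2+2) - u (m2+2-1) + h^2/2 * g1 (u (m2+2))
          = h * α * g2 (u (m2+2)) := hbd
      have hbd'' : u (m2+2) - u (m2+1) + h^2/2 * g1 (u (m2+2))
          = h * α * g2 (u (m2+2)) := by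
        have : m2 + 2 - 1 = m2 + 1 := rfl
        rw [← this]
        exact hbd'
      linear_combination (deriv g2 (u (m2+2)) * vseq g1 h u (m2+1)) * hbd''
    have hφ' : BS g1 h u (m2+2) * g2 (u (m2+2))
        - AS g1 h u (m2+2) * deriv g2 (u (m2+2)) * vseq g1 h u (m2+1) < 0 := hφlt
    nlinarith [hkey, hg2un]
  -- the principal submatrix
  have hsubT : (Jac g1 g2 (m2+2) h α u).submatrix (Fin.castLE (Nat.sub_le (m2+2) 1))
      (Fin.castLE (Nat.sub_le (m2+2) 1)) = T Γc (m2+1) := by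
    ext i j
    rw [Matrix.submatrix_apply, hJT]
    rw [T_apply_E, T_apply_E]
    simp [Fin.coe_castLE]
  have hposdef : (T Γc (m2+1)).PosDef := by
    apply T_posDef Γc (m2+1) (by omega)
    intro i hi
    rcases Nat.eq_zero_or_pos i with rfl | hi0
    · have : Γc 0 = 1 + h ^ 2 / 2 * deriv g1 (u 1) := by simp [hΓc]
      rw [if_pos rfl, this]
      have hu1 : 0 < u 1 := hsol.1 1 le_rfl (by omega)
      nlinarith [mul_pos he (hg1d1 _ hu1)]
    · have h1 : ¬(i = 0) := by omega
      have h2 : ¬(i = m2 + 2 - 1) := by omega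
      have h2' : ¬(i = m2 + 1) := by omega
      have : Γc i = 2 + h ^ 2 * deriv g1 (u (i+1)) := by
        simp [hΓc, h1, h2, h2']
      rw [if_neg h1, this]
      have hui : 0 < u (i+1) := hsol.1 (i+1) (by omega) (by omega)
      nlinarith [mul_pos (by positivity : (0:ℝ) < h^2) (hg1d1 _ hui)]
  refine ⟨?_, hdetneg, ?_, ?_⟩
  · rw [Matrix.isUnit_iff_isUnit_det]
    exact isUnit_iff_ne_zero.mpr (ne_of_lt hdetneg)
  · rw [hsubT]; exact T_isSymm Γc (m2+1)
  · rw [hsubT]; exact hposdef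
end

section
/- Let (α, u) = (α, u₁, …, u_n) ∈ (0, ∞)^{n+1} be a positive solution of the discrete system (S), so that u_k = U_k(u₁) for 1 ≤ k ≤ n. If the function g := g₁/g₂ is strictly decreasing on (0, ∞), then J(α, u) is invertible and for all 1 ≤ i, j ≤ n its inverse satisfies (J(α, u)⁻¹)_{ij} = Σ_{k = max{i, j}}^{n−1} (U_i'(u₁)·U_j'(u₁))/(U_k'(u₁)·U_{k+1}'(u₁)) + (U_i'(u₁)·U_j'(u₁))/(U_n'(u₁)·det(J(α, u))), where U₁'(u₁) := 1. -/
open Finset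

noncomputable def dU (g1 : ℝ → ℝ) (h : ℝ) : ℕ → ℝ → ℝ
  | 0, _ => 1
  | 1, _ => 1
  | 2, x => 1 + h ^ 2 / 2 * deriv g1 x
  | k + 3, x => 2 * dU g1 h (k + 2) x - dU g1 h (k + 1) x
      + h ^ 2 * deriv g1 (U g1 h (k + 2) x) * dU g1 h (k + 2) x

lemma U_hasDerivAt (g1 : ℝ → ℝ) (hg : Differentiable ℝ g1) (h : ℝ) (x : ℝ) :
    ∀ k, HasDerivAt (U g1 h k) (dU g1 h k x) x := by
  have key : ∀ k, HasDerivAt (U g1 h k) (dU g1 h k x) x ∧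
      HasDerivAt (U g1 h (k+1)) (dU g1 h (k+1) x) x ∧
      HasDerivAt (U g1 h (k+2)) (dU g1 h (k+2) x) x := by
    intro k
    induction k with
    | zero =>
      refine ⟨?_, ?_, ?_⟩
      · simpa [U, dU] using hasDerivAt_id' x
      · simpa [U, dU] using hasDerivAt_id' x
      · have := ((hg x).hasDerivAt.const_mul (h ^ 2 / 2)).add_const 0
        have h2 : HasDerivAt (fun u => u + h ^ 2 / 2 * g1 u)
            (1 + h ^ 2 / 2 * deriv g1 x) x :=
          (hasDerivAt_id x).add ((hg x).hasDerivAt.const_mul (h ^ 2 / 2))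
        simpa [U, dU] using h2
    | succ m ih =>
      refine ⟨ih.2.1, ih.2.2, ?_⟩
      have h1 := ih.2.2.const_mul (2:ℝ)
      have h2 := ih.2.1
      have h3 : HasDerivAt (fun u => g1 (U g1 h (m + 2) u))
          (deriv g1 (U g1 h (m + 2) x) * dU g1 h (m + 2) x) x :=
        (hg _).hasDerivAt.comp x ih.2.2
      have h4 := (h1.sub h2).add (h3.const_mul (h ^ 2))
      have : HasDerivAt (fun u => 2 * U g1 h (m + 2) u - U g1 h (m + 1) u
          + h ^ 2 * g1 (U g1 h (m + 2) u))
          (2 * dU g1 h (m + 2) x - dU g1 h (m + 1) x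
          + h ^ 2 * (deriv g1 (U g1 h (m + 2) x) * dU g1 h (m + 2) x)) x := h4
      have e1 : U g1 h (m + 3) = fun u => 2 * U g1 h (m + 2) u - U g1 h (m + 1) u
          + h ^ 2 * g1 (U g1 h (m + 2) u) := by
        funext u; simp [U]
      have e2 : dU g1 h (m + 3) x = 2 * dU g1 h (m + 2) x - dU g1 h (m + 1) x
          + h ^ 2 * (deriv g1 (U g1 h (m + 2) x) * dU g1 h (m + 2) x) := by
        simp [dU]; ring
      rw [e1, e2]; exact this
  exact fun k => (key k).1

lemma deriv_U (g1 : ℝ → ℝ) (hg : Differentiable ℝ g1) (h : ℝ) (x : ℝ) (k : ℕ) :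
    deriv (U g1 h k) x = dU g1 h k x :=
  (U_hasDerivAt g1 hg h x k).deriv


-- quotient derivative inequality at an interior point of strict antitonicity
lemma quot_deriv_le (g1 g2 : ℝ → ℝ) (hg1 : Differentiable ℝ g1) (hg2 : Differentiable ℝ g2)
    (x : ℝ) (hx : 0 < x) (hg2x : g2 x ≠ 0)
    (hdec : StrictAntiOn (fun y => g1 y / g2 y) (Set.Ioi 0)) :
    deriv g1 x * g2 x ≤ g1 x * deriv g2 x := by
  have hq : HasDerivAt (fun y => g1 y / g2 y)
      ((deriv g1 x * g2 x - g1 x * deriv g2 x) / g2 x ^ 2) x :=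
    (hg1 x).hasDerivAt.div (hg2 x).hasDerivAt hg2x
  have hs := hasDerivAt_iff_tendsto_slope.1 hq
  have hmono : nhdsWithin x (Set.Ioi x) ≤ nhdsWithin x {x}ᶜ := by
    apply nhdsWithin_mono
    intro y hy
    exact fun hxy => (ne_of_gt hy) (by simpa using hxy)
  have hs' := hs.mono_left hmono
  have hev : ∀ᶠ y in nhdsWithin x (Set.Ioi x),
      slope (fun y => g1 y / g2 y) x y ≤ 0 := by
    filter_upwards [self_mem_nhdsWithin] with y hy
    have hy' : x < y := hy
    have h0y : (0:ℝ) < y := hx.trans hy'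
    have := hdec (Set.mem_Ioi.2 hx) (Set.mem_Ioi.2 h0y) hy'
    rw [slope_def_field]
    apply div_nonpos_of_nonpos_of_nonneg
    · simp only [sub_nonpos]; exact le_of_lt this
    · linarith
  have hle : (deriv g1 x * g2 x - g1 x * deriv g2 x) / g2 x ^ 2 ≤ 0 :=
    le_of_tendsto hs' hev
  have h2 : (0:ℝ) < g2 x ^ 2 := by positivity
  by_contra hcon; push_neg at hcon; have : 0 < (deriv g1 x * g2 x - g1 x * deriv g2 x) / g2 x ^ 2 := div_pos (by linarith) h2; linarith

-- positivity of a function with positive derivative and f 0 = 0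
lemma pos_of_deriv_pos (f : ℝ → ℝ) (hf : Differentiable ℝ f) (hf0 : f 0 = 0)
    (hf' : ∀ x > 0, 0 < deriv f x) {x : ℝ} (hx : 0 < x) : 0 < f x := by
  have hm : StrictMonoOn f (Set.Ici 0) := by
    apply strictMonoOn_of_deriv_pos (convex_Ici 0) hf.continuous.continuousOn
    intro y hy
    rw [interior_Ici] at hy
    exact hf' y hy
  have := hm (Set.self_mem_Ici) (Set.mem_Ici.2 hx.le) hx
  rwa [hf0] at this

-- strict monotonicity of deriv g1 on Ici 0
lemma deriv_strictMono (f : ℝ → ℝ) (hf : ContDiff ℝ 3 f)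
    (hf2 : ∀ x > 0, 0 < iteratedDeriv 2 f x) : StrictMonoOn (deriv f) (Set.Ici 0) := by
  have hd : ContDiff ℝ 2 (deriv f) := by
    have := (contDiff_succ_iff_deriv (n := 2)).1 (by exact_mod_cast hf)
    exact this.2.2
  apply strictMonoOn_of_deriv_pos (convex_Ici 0) hd.continuous.continuousOn
  intro y hy
  rw [interior_Ici] at hy
  have : iteratedDeriv 2 f y = deriv (deriv f) y := by
    rw [iteratedDeriv_succ, iteratedDeriv_one]
  have := hf2 y hy
  rwa [iteratedDeriv_succ, iteratedDeriv_one] at this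

-- convexity-type inequality:  f y - f x ≤ deriv f y * (y - x)  for 0 < x ≤ y
lemma convex_ineq (f : ℝ → ℝ) (hf : ContDiff ℝ 3 f)
    (hf2 : ∀ x > 0, 0 < iteratedDeriv 2 f x) {x y : ℝ} (hx : 0 < x) (hxy : x ≤ y) :
    f y - f x ≤ deriv f y * (y - x) := by
  rcases eq_or_lt_of_le hxy with rfl | hlt
  · simp
  have hdiff : Differentiable ℝ f := hf.differentiable (by norm_num)
  obtain ⟨c, hc, hc2⟩ := exists_hasDerivAt_eq_slope f (deriv f) hlt
    hdiff.continuous.continuousOn (fun z _ => (hdiff z).hasDerivAt)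
  have hmono := deriv_strictMono f hf hf2
  have hcy : deriv f c ≤ deriv f y := by
    apply le_of_lt
    exact hmono (Set.mem_Ici.2 (le_of_lt (hx.trans hc.1))) (Set.mem_Ici.2 (hx.le.trans hxy)) hc.2
  have hyx : (0:ℝ) < y - x := by linarith
  rw [hc2] at hcy
  calc f y - f x = (f y - f x) / (y - x) * (y - x) := by field_simp
  _ ≤ deriv f y * (y - x) := by
      apply mul_le_mul_of_nonneg_right hcy hyx.le

lemma Jac_mul_apply (g1 g2 : ℝ → ℝ) (n : ℕ) (h α : ℝ) (u : ℕ → ℝ)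
    (M : Matrix (Fin n) (Fin n) ℝ) (W : ℕ → ℕ → ℝ)
    (hM : ∀ i j : Fin n, M i j = W ((i : ℕ) + 1) ((j : ℕ) + 1)) (i j : Fin n) :
    (Jac g1 g2 n h α u * M) i j =
      (if (i : ℕ) = 0 then 1 + h ^ 2 / 2 * deriv g1 (u 1)
       else if (i : ℕ) = n - 1 then 1 + h ^ 2 / 2 * deriv g1 (u n) - h * α * deriv g2 (u n)
       else 2 + h ^ 2 * deriv g1 (u ((i : ℕ) + 1))) * W ((i : ℕ) + 1) ((j : ℕ) + 1)
      - (if (i : ℕ) = 0 then 0 else W (i : ℕ) ((j : ℕ) + 1))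
      - (if (i : ℕ) + 2 ≤ n then W ((i : ℕ) + 2) ((j : ℕ) + 1) else 0) := by
  set Γ : ℝ := (if (i : ℕ) = 0 then 1 + h ^ 2 / 2 * deriv g1 (u 1)
       else if (i : ℕ) = n - 1 then 1 + h ^ 2 / 2 * deriv g1 (u n) - h * α * deriv g2 (u n)
       else 2 + h ^ 2 * deriv g1 (u ((i : ℕ) + 1))) with hΓ
  have hsplit : ∀ l : Fin n, Jac g1 g2 n h α u i l * M l j =
      (if l = i then Γ * W ((i : ℕ) + 1) ((j : ℕ) + 1) else 0)
      + (if (l : ℕ) + 1 = (i : ℕ) then -W ((l : ℕ) + 1) ((j : ℕ) + 1) else 0)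
      + (if (l : ℕ) = (i : ℕ) + 1 then -W ((l : ℕ) + 1) ((j : ℕ) + 1) else 0) := by
    intro l
    rw [hM]
    simp only [Jac, Matrix.of_apply]
    by_cases h1 : i = l
    · subst h1
      rw [if_pos rfl, if_pos rfl, if_neg (show ¬((i : ℕ) + 1 = (i : ℕ)) by omega),
        if_neg (show ¬((i : ℕ) = (i : ℕ) + 1) by omega), hΓ]
      ring
    · rw [if_neg h1]
      by_cases h2 : (i : ℕ) + 1 = (l : ℕ)
      · rw [if_pos (Or.inl h2), if_neg (fun he => h1 he.symm),
          if_neg (show ¬((l : ℕ) + 1 = (i : ℕ)) by omega), if_pos h2.symm]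
        ring
      · by_cases h3 : (l : ℕ) + 1 = (i : ℕ)
        · rw [if_pos (Or.inr h3), if_neg (fun he => h1 he.symm), if_pos h3,
            if_neg (show ¬((l : ℕ) = (i : ℕ) + 1) by omega)]
          ring
        · rw [if_neg (show ¬((i : ℕ) + 1 = (l : ℕ) ∨ (l : ℕ) + 1 = (i : ℕ)) by tauto),
            if_neg (fun he => h1 he.symm), if_neg h3, if_neg (fun he => h2 he.symm)]
          ring
  have hmul : (Jac g1 g2 n h α u * M) i j = ∑ l : Fin n, Jac g1 g2 n h α u i l * M l j :=
    Matrix.mul_apply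
  rw [hmul]
  simp only [hsplit]
  rw [Finset.sum_add_distrib, Finset.sum_add_distrib]
  have s1 : (∑ l : Fin n, if l = i then Γ * W ((i : ℕ) + 1) ((j : ℕ) + 1) else 0)
      = Γ * W ((i : ℕ) + 1) ((j : ℕ) + 1) := by
    rw [Finset.sum_ite_eq' univ i (fun _ => Γ * W ((i : ℕ) + 1) ((j : ℕ) + 1))]
    simp
  have s2 : (∑ l : Fin n, if (l : ℕ) + 1 = (i : ℕ) then -W ((l : ℕ) + 1) ((j : ℕ) + 1) else 0)
      = -(if (i : ℕ) = 0 then 0 else W (i : ℕ) ((j : ℕ) + 1)) := by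
    by_cases hi0 : (i : ℕ) = 0
    · rw [if_pos hi0]
      rw [Finset.sum_eq_zero]
      · simp
      · intro l _
        rw [if_neg (by omega)]
    · rw [if_neg hi0]
      have hlt : (i : ℕ) - 1 < n := by omega
      have : ∀ l : Fin n, (if (l : ℕ) + 1 = (i : ℕ) then -W ((l : ℕ) + 1) ((j : ℕ) + 1) else 0)
          = (if l = (⟨(i : ℕ) - 1, hlt⟩ : Fin n) then -W ((i : ℕ)) ((j : ℕ) + 1) else 0) := by
        intro l
        by_cases hc : (l : ℕ) + 1 = (i : ℕ)
        · rw [if_pos hc, if_pos (Fin.ext (by simp; omega)), hc]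
        · rw [if_neg hc, if_neg (fun he => hc (by rw [he]; simp; omega))]
      simp only [this]
      rw [Finset.sum_ite_eq' univ _ (fun _ => -W ((i : ℕ)) ((j : ℕ) + 1))]
      simp
  have s3 : (∑ l : Fin n, if (l : ℕ) = (i : ℕ) + 1 then -W ((l : ℕ) + 1) ((j : ℕ) + 1) else 0)
      = -(if (i : ℕ) + 2 ≤ n then W ((i : ℕ) + 2) ((j : ℕ) + 1) else 0) := by
    by_cases hin : (i : ℕ) + 2 ≤ n
    · rw [if_pos hin]
      have hlt : (i : ℕ) + 1 < n := by omega
      have : ∀ l : Fin n, (if (l : ℕ) = (i : ℕ) + 1 then -W ((l : ℕ) + 1) ((j : ℕ) + 1) else 0)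
          = (if l = (⟨(i : ℕ) + 1, hlt⟩ : Fin n) then -W ((i : ℕ) + 2) ((j : ℕ) + 1) else 0) := by
        intro l
        by_cases hc : (l : ℕ) = (i : ℕ) + 1
        · rw [if_pos hc, if_pos (Fin.ext (by simp [hc])), hc]
        · rw [if_neg hc, if_neg (fun he => hc (by rw [he]))]
      simp only [this]
      rw [Finset.sum_ite_eq' univ _ (fun _ => -W ((i : ℕ) + 2) ((j : ℕ) + 1))]
      simp
    · rw [if_neg hin]
      rw [Finset.sum_eq_zero]
      · simp
      · intro l _
        rw [if_neg (by omega)]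
  rw [s1, s2, s3]
  ring

noncomputable def invM (v : ℕ → ℝ) (d : ℝ) (n : ℕ) : Matrix (Fin n) (Fin n) ℝ :=
  Matrix.of fun i j => v ((i : ℕ) + 1) * v ((j : ℕ) + 1) *
    ((∑ k ∈ Finset.Icc (max ((i : ℕ) + 1) ((j : ℕ) + 1)) (n - 1),
        1 / (v k * v (k + 1))) + 1 / (v n * d))

section core
variable (g1 g2 : ℝ → ℝ) (n : ℕ) (h α : ℝ) (u : ℕ → ℝ) (v : ℕ → ℝ) (d : ℝ)

theorem Jac_mul_invM (hn : 2 ≤ n)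
    (hv1 : v 1 = 1)
    (hvpos : ∀ k, 1 ≤ k → k ≤ n → 0 < v k)
    (hG1 : 1 + h ^ 2 / 2 * deriv g1 (u 1) = v 2)
    (hGs : ∀ s, 2 ≤ s → s ≤ n - 1 → (2 + h ^ 2 * deriv g1 (u s)) * v s = v (s - 1) + v (s + 1))
    (hd : (1 + h ^ 2 / 2 * deriv g1 (u n) - h * α * deriv g2 (u n)) * v n - v (n - 1) = d)
    (hd0 : d ≠ 0) :
    Jac g1 g2 n h α u * invM v d n = 1 := by
  obtain ⟨c, hc⟩ : ∃ c : ℕ → ℝ, c = fun m =>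
      (∑ k ∈ Finset.Icc m (n - 1), 1 / (v k * v (k + 1))) + 1 / (v n * d) := ⟨_, rfl⟩
  have hvne : ∀ k, 1 ≤ k → k ≤ n → v k ≠ 0 := fun k h1 h2 => (hvpos k h1 h2).ne'
  have hc_step : ∀ m, 1 ≤ m → m ≤ n - 1 → v m * v (m + 1) * (c m - c (m + 1)) = 1 := by
    intro m h1 h2
    have hins : Finset.Icc m (n - 1) = insert m (Finset.Icc (m + 1) (n - 1)) := by
      ext x; simp only [Finset.mem_Icc, Finset.mem_insert]; omega
    have hnm : m ∉ Finset.Icc (m + 1) (n - 1) := by simp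
    have hcm : c m = 1 / (v m * v (m + 1)) + c (m + 1) := by
      simp only [hc, hins, Finset.sum_insert hnm]; ring
    rw [hcm]
    have h1' : v m ≠ 0 := hvne m h1 (by omega)
    have h2' : v (m + 1) ≠ 0 := hvne (m + 1) (by omega) (by omega)
    field_simp
    ring
  have hc_top : v n * d * c n = 1 := by
    have hemp : Finset.Icc n (n - 1) = ∅ := Finset.Icc_eq_empty (by omega)
    have hvn : v n ≠ 0 := hvne n (by omega) le_rfl
    simp only [hc, hemp, Finset.sum_empty, zero_add]
    field_simp
  have hW : ∀ i j : Fin n, invM v d n i j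
      = (fun a b => v a * v b * c (max a b)) ((i : ℕ) + 1) ((j : ℕ) + 1) := by
    intro i j; simp only [invM, Matrix.of_apply, hc]
  ext i j
  rw [Jac_mul_apply g1 g2 n h α u (invM v d n) (fun a b => v a * v b * c (max a b)) hW i j]
  have hone : (1 : Matrix (Fin n) (Fin n) ℝ) i j = if i = j then 1 else 0 :=
    Matrix.one_apply
  rw [hone]
  have hij : (i = j) ↔ ((i : ℕ) = (j : ℕ)) := Fin.ext_iff
  have hi : (i : ℕ) < n := i.isLt
  have hj : (j : ℕ) < n := j.isLt
  by_cases hi0 : (i : ℕ) = 0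
  · rw [if_pos hi0, if_pos hi0, if_pos (show (i : ℕ) + 2 ≤ n by omega)]
    simp only [hi0]
    rw [show (0:ℕ) + 1 = 1 from rfl, show (0:ℕ) + 2 = 2 from rfl]
    by_cases hj0 : (j : ℕ) = 0
    · rw [if_pos (hij.2 (by omega)), hj0]
      rw [show max 1 (0 + 1) = 1 from rfl, show max 2 (0 + 1) = 2 from rfl]
      have e1 := hc_step 1 le_rfl (by omega)
      rw [hv1] at e1
      norm_num at e1 ⊢
      rw [hG1, hv1]
      linear_combination e1
    · rw [if_neg (fun he => hj0 (by omega))]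
      rw [show max 1 ((j : ℕ) + 1) = (j : ℕ) + 1 from by omega,
        show max 2 ((j : ℕ) + 1) = (j : ℕ) + 1 from by omega, hG1, hv1]
      ring
  · rw [if_neg hi0, if_neg hi0]
    by_cases hin : (i : ℕ) = n - 1
    · rw [if_pos hin, if_neg (show ¬((i : ℕ) + 2 ≤ n) by omega)]
      rw [show (i : ℕ) + 1 = n from by omega, hin]
      have e1 := hc_step (n - 1) (by omega) le_rfl
      rw [show n - 1 + 1 = n from by omega] at e1
      by_cases hjn : (j : ℕ) = n - 1
      · rw [if_pos (hij.2 (by omega)), hjn]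
        rw [show n - 1 + 1 = n from by omega]
        rw [show max n n = n from by omega, show max (n - 1) n = n from by omega]
        linear_combination (v n * c n) * hd + hc_top
      · rw [if_neg (fun he => hjn (by omega))]
        rw [show max n ((j : ℕ) + 1) = n from by omega,
          show max (n - 1) ((j : ℕ) + 1) = n - 1 from by omega]
        have hvn : v n ≠ 0 := hvne n (by omega) le_rfl
        apply mul_left_cancel₀ hvn
        rw [mul_zero]
        linear_combination (v ((j : ℕ) + 1) * c n * v n) * hd
          - v ((j : ℕ) + 1) * e1 + v ((j : ℕ) + 1) * hc_top
    · -- interior row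
      rw [if_neg hin, if_pos (show (i : ℕ) + 2 ≤ n by omega)]
      have hrec := hGs ((i : ℕ) + 1) (by omega) (by omega)
      rw [show (i : ℕ) + 1 - 1 = (i : ℕ) from by omega,
        show (i : ℕ) + 1 + 1 = (i : ℕ) + 2 from by omega] at hrec
      have e1 := hc_step ((i : ℕ) + 1) (by omega) (by omega)
      rw [show (i : ℕ) + 1 + 1 = (i : ℕ) + 2 from by omega] at e1
      rcases lt_trichotomy ((j : ℕ)) ((i : ℕ)) with hlt | heq | hgt
      · rw [if_neg (fun he => (by omega : ¬((i : ℕ) = (j : ℕ))) (hij.1 he))]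
        rw [show max ((i : ℕ) + 1) ((j : ℕ) + 1) = (i : ℕ) + 1 from by omega,
          show max ((i : ℕ)) ((j : ℕ) + 1) = (i : ℕ) from by omega,
          show max ((i : ℕ) + 2) ((j : ℕ) + 1) = (i : ℕ) + 2 from by omega]
        have e0 := hc_step ((i : ℕ)) (by omega) (by omega)
        have hv1' : v ((i : ℕ) + 1) ≠ 0 := hvne _ (by omega) (by omega)
        apply mul_left_cancel₀ hv1'
        rw [mul_zero]
        linear_combination (v ((j : ℕ) + 1) * c ((i : ℕ) + 1) * v ((i : ℕ) + 1)) * hrec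
          - v ((j : ℕ) + 1) * e0 + v ((j : ℕ) + 1) * e1
      · rw [if_pos (hij.2 heq.symm), heq]
        rw [show max ((i : ℕ) + 1) ((i : ℕ) + 1) = (i : ℕ) + 1 from by omega,
          show max ((i : ℕ)) ((i : ℕ) + 1) = (i : ℕ) + 1 from by omega,
          show max ((i : ℕ) + 2) ((i : ℕ) + 1) = (i : ℕ) + 2 from by omega]
        linear_combination (v ((i : ℕ) + 1) * c ((i : ℕ) + 1)) * hrec + e1
      · rw [if_neg (fun he => (by omega : ¬((i : ℕ) = (j : ℕ))) (hij.1 he))]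
        rw [show max ((i : ℕ) + 1) ((j : ℕ) + 1) = (j : ℕ) + 1 from by omega,
          show max ((i : ℕ)) ((j : ℕ) + 1) = (j : ℕ) + 1 from by omega,
          show max ((i : ℕ) + 2) ((j : ℕ) + 1) = (j : ℕ) + 1 from by omega]
        linear_combination (v ((j : ℕ) + 1) * c ((j : ℕ) + 1)) * hrec

theorem Jac_det (hn : 2 ≤ n)
    (hv1 : v 1 = 1)
    (hvpos : ∀ k, 1 ≤ k → k ≤ n → 0 < v k)
    (hG1 : 1 + h ^ 2 / 2 * deriv g1 (u 1) = v 2)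
    (hGs : ∀ s, 2 ≤ s → s ≤ n - 1 → (2 + h ^ 2 * deriv g1 (u s)) * v s = v (s - 1) + v (s + 1))
    (hd : (1 + h ^ 2 / 2 * deriv g1 (u n) - h * α * deriv g2 (u n)) * v n - v (n - 1) = d) :
    (Jac g1 g2 n h α u).det = d := by
  have hvne : ∀ k, 1 ≤ k → k ≤ n → v k ≠ 0 := fun k h1 h2 => (hvpos k h1 h2).ne'
  set W : ℕ → ℕ → ℝ := fun a b => if a ≤ b then v a / v b else 0 with hWdef
  set T : Matrix (Fin n) (Fin n) ℝ :=
    Matrix.of (fun i j : Fin n => W ((i : ℕ) + 1) ((j : ℕ) + 1)) with hTdef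
  have hM : ∀ i j : Fin n, T i j = W ((i : ℕ) + 1) ((j : ℕ) + 1) := fun _ _ => rfl
  have hTtri : T.BlockTriangular id := by
    intro i j hji
    simp only [hTdef, Matrix.of_apply, hWdef]
    have hji' : (j : ℕ) < (i : ℕ) := hji
    rw [if_neg (by omega)]
  have hTdet : T.det = 1 := by
    rw [Matrix.det_of_upperTriangular hTtri]
    apply Finset.prod_eq_one
    intro i _
    simp only [hTdef, Matrix.of_apply, hWdef, if_pos (le_refl ((i : ℕ) + 1))]
    exact div_self (hvne ((i : ℕ) + 1) (by omega) (by omega : (i : ℕ) + 1 ≤ n))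
  -- entries of J * T
  have hJT : ∀ i j : Fin n, (Jac g1 g2 n h α u * T) i j =
      if (i : ℕ) < (j : ℕ) then 0
      else if (i : ℕ) = (j : ℕ) then
        (if (i : ℕ) = n - 1 then d / v n else v ((i : ℕ) + 2) / v ((i : ℕ) + 1))
      else (Jac g1 g2 n h α u * T) i j := by
    intro i j
    have hi : (i : ℕ) < n := i.isLt
    have hj : (j : ℕ) < n := j.isLt
    rcases lt_trichotomy ((i : ℕ)) ((j : ℕ)) with hlt | heq | hgt
    · rw [if_pos hlt]
      rw [Jac_mul_apply g1 g2 n h α u T W hM i j]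
      simp only [hWdef]
      have hin : ¬((i : ℕ) = n - 1) := by omega
      rw [if_pos (show (i : ℕ) + 2 ≤ n by omega)]
      rw [if_pos (show (i : ℕ) + 1 ≤ (j : ℕ) + 1 by omega),
        if_pos (show (i : ℕ) + 2 ≤ (j : ℕ) + 1 by omega)]
      have hvt : v ((j : ℕ) + 1) ≠ 0 := hvne _ (by omega) (by omega)
      by_cases hi0 : (i : ℕ) = 0
      · rw [if_pos hi0, if_pos hi0, hi0]
        rw [show (0:ℕ) + 1 = 1 from rfl, show (0:ℕ) + 2 = 2 from rfl, hv1, hG1]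
        ring
      · rw [if_neg hi0, if_neg hi0, if_neg hin,
          if_pos (show (i : ℕ) ≤ (j : ℕ) + 1 by omega)]
        have hrec := hGs ((i : ℕ) + 1) (by omega) (by omega)
        rw [show (i : ℕ) + 1 - 1 = (i : ℕ) from by omega,
          show (i : ℕ) + 1 + 1 = (i : ℕ) + 2 from by omega] at hrec
        field_simp
        linear_combination hrec
    · rw [if_neg (by omega), if_pos heq]
      rw [Jac_mul_apply g1 g2 n h α u T W hM i j]
      simp only [hWdef]
      rw [← heq]
      rw [if_pos (le_refl ((i : ℕ) + 1))]
      have hvs : v ((i : ℕ) + 1) ≠ 0 := hvne _ (by omega) (by omega)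
      by_cases hin : (i : ℕ) = n - 1
      · rw [if_pos hin, if_pos hin, if_neg (show ¬((i : ℕ) + 2 ≤ n) by omega)]
        by_cases hi0 : (i : ℕ) = 0
        · omega
        · rw [if_neg hi0, if_neg hi0, if_pos (show (i : ℕ) ≤ (i : ℕ) + 1 by omega)]
          rw [show (i : ℕ) + 1 = n from by omega, hin]
          have hvn : v n ≠ 0 := hvne n (by omega) le_rfl
          have hre : (1 + h ^ 2 / 2 * deriv g1 (u n) - h * α * deriv g2 (u n)) * (v n / v n)
              - v (n - 1) / v n - 0 = ((1 + h ^ 2 / 2 * deriv g1 (u n) - h * α * deriv g2 (u n))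
                * v n - v (n - 1)) / v n := by
            field_simp; ring
          rw [hre, hd]
      · rw [if_neg hin, if_neg hin, if_pos (show (i : ℕ) + 2 ≤ n by omega),
          if_neg (show ¬((i : ℕ) + 2 ≤ (i : ℕ) + 1) by omega)]
        by_cases hi0 : (i : ℕ) = 0
        · rw [if_pos hi0, if_pos hi0, hi0]
          rw [show (0:ℕ) + 1 = 1 from rfl, hv1, hG1]
          simp
        · rw [if_neg hi0, if_neg hi0, if_pos (show (i : ℕ) ≤ (i : ℕ) + 1 by omega)]
          have hrec := hGs ((i : ℕ) + 1) (by omega) (by omega)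
          rw [show (i : ℕ) + 1 - 1 = (i : ℕ) from by omega,
            show (i : ℕ) + 1 + 1 = (i : ℕ) + 2 from by omega] at hrec
          have hre2 : (2 + h ^ 2 * deriv g1 (u ((i : ℕ) + 1))) * (v ((i : ℕ) + 1) / v ((i : ℕ) + 1))
              - v (i : ℕ) / v ((i : ℕ) + 1) - 0
              = ((2 + h ^ 2 * deriv g1 (u ((i : ℕ) + 1))) * v ((i : ℕ) + 1) - v (i : ℕ))
                / v ((i : ℕ) + 1) := by
            field_simp; ring
          rw [hre2, show (2 + h ^ 2 * deriv g1 (u ((i : ℕ) + 1))) * v ((i : ℕ) + 1) - v (i : ℕ)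
            = v ((i : ℕ) + 2) from by linear_combination hrec]
    · rw [if_neg (by omega), if_neg (by omega)]
  have hJTtri : (Jac g1 g2 n h α u * T).BlockTriangular OrderDual.toDual := by
    intro i j hji
    have : (i : ℕ) < (j : ℕ) := hji
    rw [hJT i j, if_pos this]
  have hdetJT : (Jac g1 g2 n h α u * T).det = ∏ i : Fin n, (Jac g1 g2 n h α u * T) i i :=
    Matrix.det_of_lowerTriangular _ hJTtri
  have hdiag : ∀ i : Fin n, (Jac g1 g2 n h α u * T) i i =
      (if (i : ℕ) = n - 1 then d / v n else v ((i : ℕ) + 2) / v ((i : ℕ) + 1)) := by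
    intro i
    rw [hJT i i, if_neg (lt_irrefl ((i : ℕ)))]
    simp

  have hprod : (∏ i : Fin n, (Jac g1 g2 n h α u * T) i i) = d := by
    rw [Finset.prod_congr rfl (fun i _ => hdiag i)]
    rw [Fin.prod_univ_eq_prod_range
      (fun k => if k = n - 1 then d / v n else v (k + 2) / v (k + 1)) n]
    have htel : ∀ m, m ≤ n - 1 →
        (∏ k ∈ Finset.range m, v (k + 2) / v (k + 1)) = v (m + 1) := by
      intro m
      induction m with
      | zero => intro _; simp [hv1]
      | succ p ih =>
        intro hp
        rw [Finset.prod_range_succ, ih (by omega)]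
        have h1' : v (p + 1) ≠ 0 := hvne _ (by omega) (by omega)
        field_simp
    have key : ∀ m, m + 1 = n →
        (∏ k ∈ Finset.range (m + 1), if k = n - 1 then d / v n else v (k + 2) / v (k + 1)) = d := by
      intro m hmn
      rw [Finset.prod_range_succ, if_pos (show m = n - 1 by omega)]
      have hcong : (∏ k ∈ Finset.range m, if k = n - 1 then d / v n else v (k + 2) / v (k + 1))
          = ∏ k ∈ Finset.range m, v (k + 2) / v (k + 1) := by
        apply Finset.prod_congr rfl
        intro k hk
        simp only [Finset.mem_range] at hk
        rw [if_neg (by omega)]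
      rw [hcong]
      rw [htel m (by omega), show m + 1 = n from hmn]
      have hvn : v n ≠ 0 := hvne n (by omega) le_rfl
      field_simp
    have := key (n - 1) (by omega)
    rwa [show n - 1 + 1 = n from by omega] at this
  have := Matrix.det_mul (Jac g1 g2 n h α u) T
  rw [hTdet, mul_one] at this
  rw [← this, hdetJT, hprod]

end core

lemma dU_rec (g1 : ℝ → ℝ) (h x : ℝ) (k : ℕ) (hk : 1 ≤ k) :
    dU g1 h (k + 2) x = 2 * dU g1 h (k + 1) x - dU g1 h k x
      + h ^ 2 * deriv g1 (U g1 h (k + 1) x) * dU g1 h (k + 1) x := by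
  obtain ⟨i, rfl⟩ := Nat.exists_eq_add_of_le hk
  simp only [show 1 + i + 2 = i + 3 from by omega, show 1 + i + 1 = i + 2 from by omega,
    show 1 + i = i + 1 from by omega]
  rw [dU]

section seqs
set_option maxHeartbeats 2000000 in
theorem seq_main
    (g1 g2 : ℝ → ℝ)
    (hg1C : ContDiff ℝ 3 g1) (hg2C : ContDiff ℝ 3 g2)
    (hg10 : g1 0 = 0) (hg20 : g2 0 = 0)
    (hg1d1 : ∀ x > 0, 0 < deriv g1 x) (hg2d1 : ∀ x > 0, 0 < deriv g2 x)
    (hg1d2 : ∀ x > 0, 0 < iteratedDeriv 2 g1 x)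
    (n : ℕ) (hn : 2 ≤ n) (h : ℝ) (hh : h = 1 / ((n : ℝ) - 1))
    (α : ℝ) (hα : 0 < α) (u : ℕ → ℝ)
    (hsol : IsSolution g1 g2 n h α u)
    (hU : ∀ k, 1 ≤ k → k ≤ n → u k = U g1 h k (u 1))
    (hdec : StrictAntiOn (fun x => g1 x / g2 x) (Set.Ioi 0))
    (quot_deriv_le : deriv g1 (u n) * g2 (u n) ≤ g1 (u n) * deriv g2 (u n))
    (pos_g1 : ∀ x > 0, 0 < g1 x) (pos_g2 : ∀ x > 0, 0 < g2 x)
    (mono_dg1 : StrictMonoOn (deriv g1) (Set.Ici 0))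
    (convex_g1 : ∀ x y : ℝ, 0 < x → x ≤ y → g1 y - g1 x ≤ deriv g1 y * (y - x)) :
    (∀ k, 1 ≤ k → k ≤ n → 0 < dU g1 h k (u 1)) ∧
    ((1 + h ^ 2 / 2 * deriv g1 (u n) - h * α * deriv g2 (u n)) * dU g1 h n (u 1)
      - dU g1 h (n - 1) (u 1)) < 0 := by
  obtain ⟨hupos, he1, he2, he3⟩ := hsol
  have hh0 : 0 < h := by
    rw [hh]
    have : (1:ℝ) ≤ (n:ℝ) - 1 := by
      have : (2:ℝ) ≤ (n:ℝ) := by exact_mod_cast hn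
      linarith
    positivity
  set v : ℕ → ℝ := fun k => dU g1 h k (u 1) with hv_def
  have hv1 : v 1 = 1 := rfl
  have hv2 : v 2 = 1 + h ^ 2 / 2 * deriv g1 (u 1) := rfl
  have hvrec : ∀ j, 1 ≤ j → j + 1 ≤ n →
      v (j + 2) = 2 * v (j + 1) - v j + h ^ 2 * deriv g1 (u (j + 1)) * v (j + 1) := by
    intro j hj hjn
    have hUu : U g1 h (j + 1) (u 1) = u (j + 1) := (hU (j + 1) (by omega) hjn).symm
    have := dU_rec g1 h (u 1) j hj
    rw [hUu] at this
    exact this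
  -- u ordering
  have hord : ∀ k, 1 ≤ k → k ≤ n - 1 → 0 < u (k + 1) - u k := by
    intro k hk1 hkn
    induction k with
    | zero => omega
    | succ j ih =>
      rcases Nat.eq_or_lt_of_le hk1 with h1 | h1
      · -- j + 1 = 1
        have hj0 : j = 0 := by omega
        subst hj0
        rw [he1]
        have := pos_g1 (u 1) (hupos 1 le_rfl (by omega))
        positivity
      · have hj1 : 1 ≤ j := by omega
        have hjn : j ≤ n - 1 := by omega
        have ihj := ih hj1 hjn
        have hrec := he2 (j + 1) (by omega) (by omega)
        simp only [Nat.add_sub_cancel] at hrec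
        have := pos_g1 (u (j + 1)) (hupos (j + 1) (by omega) (by omega))
        nlinarith
  -- v positivity and monotonicity
  have hvPM : ∀ k, 1 ≤ k → k ≤ n - 1 → 0 < v k ∧ v k < v (k + 1) := by
    intro k hk1
    induction k with
    | zero => omega
    | succ j ih =>
      intro hkn
      rcases Nat.eq_or_lt_of_le hk1 with h1 | h1
      · have hj0 : j = 0 := by omega
        subst hj0
        constructor
        · rw [hv1]; norm_num
        · rw [hv1, hv2]
          have := hg1d1 (u 1) (hupos 1 le_rfl (by omega))
          nlinarith [pow_pos hh0 2]
      · have hj1 : 1 ≤ j := by omega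
        obtain ⟨hvj, hvj'⟩ := ih hj1 (by omega)
        have hrec := hvrec j hj1 (by omega)
        have hgp := hg1d1 (u (j + 1)) (hupos (j + 1) (by omega) (by omega))
        constructor
        · linarith
        · rw [hrec]
          have hp : 0 < h ^ 2 * deriv g1 (u (j + 1)) * v (j + 1) :=
            mul_pos (mul_pos (pow_pos hh0 2) hgp) (by linarith)
          linarith
  have hvn0 : 0 < v n := by
    have := hvPM (n - 1) (by omega) le_rfl
    have hn1 : n - 1 + 1 = n := by omega
    rw [hn1] at this
    linarith [this.1, this.2]
  have hvpos : ∀ k, 1 ≤ k → k ≤ n → 0 < v k := by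
    intro k hk1 hkn
    rcases Nat.lt_or_ge k n with hlt | hge
    · exact (hvPM k hk1 (by omega)).1
    · have hkn' : k = n := by omega
      rw [hkn']
      exact hvn0
  -- the Wronskian induction
  have hQ : ∀ k, 1 ≤ k → k ≤ n - 1 →
      (v (k + 1) - v k) * g1 (u (k + 1)) <
        deriv g1 (u (k + 1)) * v (k + 1) * (u (k + 1) - u k) := by
    intro k hk1
    induction k with
    | zero => omega
    | succ j ih =>
      intro hkn
      rcases Nat.eq_or_lt_of_le hk1 with h1 | h1
      · have hj0 : j = 0 := by omega
        subst hj0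
        -- base case k = 1
        have hu1 : 0 < u 1 := hupos 1 le_rfl (by omega)
        have hu2 : 0 < u 2 := hupos 2 (by omega) (by omega)
        have h12 : 0 < u 2 - u 1 := hord 1 le_rfl (by omega)
        have hcv := convex_g1 (u 1) (u 2) hu1 (by linarith)
        have hmono : deriv g1 (u 1) < deriv g1 (u 2) :=
          mono_dg1 (Set.mem_Ici.2 hu1.le) (Set.mem_Ici.2 hu2.le) (by linarith)
        have hg1u1 : 0 < g1 (u 1) := pos_g1 _ hu1
        have hd1 : 0 < deriv g1 (u 1) := hg1d1 _ hu1
        have hd2 : 0 < deriv g1 (u 2) := hg1d1 _ hu2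
        rw [hv1, hv2, he1]
        -- goal: (h^2/2 * g1') * g1(u2) < g1'(u2) * (1 + h^2/2 g1'(u1)) * (h^2/2 g1(u1))
        have hcv' : g1 (u 2) ≤ g1 (u 1) + deriv g1 (u 2) * (h ^ 2 / 2 * g1 (u 1)) := by
          rw [← he1]; linarith
        have hy1 : (0:ℝ) < h ^ 2 / 2 * deriv g1 (u 1) := by positivity
        nlinarith
      · have hj1 : 1 ≤ j := by omega
        have ihj := ih hj1 (by omega)
        -- step: prove at k = j+1, with 2 ≤ j+1 ≤ n-1
        have hrecv := hvrec j hj1 (by omega)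
        have hrecu := he2 (j + 1) (by omega) (by omega)
        simp only [Nat.add_sub_cancel] at hrecu
        have hu1 : 0 < u (j + 1) := hupos (j + 1) (by omega) (by omega)
        have hu2 : 0 < u (j + 2) := hupos (j + 2) (by omega) (by omega)
        have hw1 : 0 < u (j + 1) - u j := hord j hj1 (by omega)
        have hw2 : 0 < u (j + 2) - u (j + 1) := hord (j + 1) (by omega) hkn
        have hv1p : 0 < v (j + 1) := (hvPM (j + 1) (by omega) (by omega)).1
        have hy2 : 0 < v (j + 2) - v (j + 1) := by
          have := (hvPM (j + 1) (by omega) (by omega)).2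
          linarith
        have hcv := convex_g1 (u (j + 1)) (u (j + 2)) hu1 (by linarith)
        have hmono : deriv g1 (u (j + 1)) < deriv g1 (u (j + 2)) :=
          mono_dg1 (Set.mem_Ici.2 hu1.le) (Set.mem_Ici.2 hu2.le) (by linarith)
        have hg1u1 : 0 < g1 (u (j + 1)) := pos_g1 _ hu1
        have hg1u2 : 0 < g1 (u (j + 2)) := pos_g1 _ hu2
        have hd1 : 0 < deriv g1 (u (j + 1)) := hg1d1 _ hu1
        have hd2 : 0 < deriv g1 (u (j + 2)) := hg1d1 _ hu2
        -- key intermediate: y_{j+1} * g1(u_{j+1}) < g1'(u_{j+1}) v_{j+1} w_{j+1}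
        have hkey : (v (j + 2) - v (j + 1)) * g1 (u (j + 1)) <
            deriv g1 (u (j + 1)) * v (j + 1) * (u (j + 2) - u (j + 1)) := by
          have e1 : v (j + 2) - v (j + 1) =
              (v (j + 1) - v j) + h ^ 2 * deriv g1 (u (j + 1)) * v (j + 1) := by
            rw [hrecv]; ring
          have e2 : u (j + 2) - u (j + 1) = (u (j + 1) - u j) + h ^ 2 * g1 (u (j + 1)) := by
            nlinarith [hrecu]
          rw [e1, e2]
          nlinarith [ihj]
        -- main chain
        have hcv' : g1 (u (j + 2)) ≤ g1 (u (j + 1)) + deriv g1 (u (j + 2)) * (u (j + 2) - u (j + 1)) := by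
          linarith
        have f1 : (v (j + 2) - v (j + 1)) * g1 (u (j + 2)) ≤
            (v (j + 2) - v (j + 1)) * (g1 (u (j + 1)) + deriv g1 (u (j + 2)) * (u (j + 2) - u (j + 1))) :=
          mul_le_mul_of_nonneg_left hcv' hy2.le
        have f2 : deriv g1 (u (j + 1)) * v (j + 1) * (u (j + 2) - u (j + 1)) ≤
            deriv g1 (u (j + 2)) * v (j + 1) * (u (j + 2) - u (j + 1)) := by
          have := mul_le_mul_of_nonneg_right (mul_le_mul_of_nonneg_right hmono.le hv1p.le) hw2.le
          linarith
        have f3 : (v (j + 2) - v (j + 1)) * (g1 (u (j + 1)) + deriv g1 (u (j + 2)) * (u (j + 2) - u (j + 1)))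
            = (v (j + 2) - v (j + 1)) * g1 (u (j + 1))
              + deriv g1 (u (j + 2)) * (v (j + 2) - v (j + 1)) * (u (j + 2) - u (j + 1)) := by ring
        have f4 : deriv g1 (u (j + 2)) * v (j + 2) * (u (j + 2) - u (j + 1))
            = deriv g1 (u (j + 2)) * v (j + 1) * (u (j + 2) - u (j + 1))
              + deriv g1 (u (j + 2)) * (v (j + 2) - v (j + 1)) * (u (j + 2) - u (j + 1)) := by ring
        linarith
  -- final sign computation
  have hn1 : n - 1 + 1 = n := by omega
  have hQn := hQ (n - 1) (by omega) le_rfl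
  rw [hn1] at hQn
  have hun : 0 < u n := hupos n (by omega) le_rfl
  have hg1un : 0 < g1 (u n) := pos_g1 _ hun
  have hg2un : 0 < g2 (u n) := pos_g2 _ hun
  have hd1un : 0 < deriv g1 (u n) := hg1d1 _ hun
  have hd2un : 0 < deriv g2 (u n) := hg2d1 _ hun
  have hvn : 0 < v n := hvpos n (by omega) le_rfl
  have hvn1 : 0 < v (n - 1) := hvpos (n - 1) (by omega) (by omega)
  have hwn : 0 < u n - u (n - 1) := by
    have := hord (n - 1) (by omega) le_rfl
    rwa [hn1] at this
  -- he3 : u n - u (n-1) + h^2/2 g1(u n) = h α g2(u n)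
  have hW : 0 < h * α * g2 (u n) := by positivity
  refine ⟨hvpos, ?_⟩
  show (1 + h ^ 2 / 2 * deriv g1 (u n) - h * α * deriv g2 (u n)) * v n - v (n - 1) < 0
  -- d * g1 * g2 ≤ g2 * (y_{n-1} g1(u n) - w_{n-1} g1'(u n) v n) < 0
  have key1 : h * α * deriv g2 (u n) * v n * g1 (u n) * g2 (u n)
      ≥ (u n - u (n - 1) + h ^ 2 / 2 * g1 (u n)) * deriv g1 (u n) * v n * g2 (u n) := by
    rw [he3]
    have hpos : 0 < h * α * v n * g2 (u n) := by positivity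
    nlinarith [mul_le_mul_of_nonneg_left quot_deriv_le hpos.le]
  have hQn' : (v n - v (n - 1)) * g1 (u n) <
      deriv g1 (u n) * v n * (u n - u (n - 1)) := hQn
  nlinarith [mul_pos hg1un hg2un]


set_option maxHeartbeats 1000000 in
theorem stmt17
    (g1 g2 : ℝ → ℝ)
    (hg1C : ContDiff ℝ 3 g1) (hg2C : ContDiff ℝ 3 g2)
    (hg1A : AnalyticAt ℝ g1 0) (hg2A : AnalyticAt ℝ g2 0)
    (hg10 : g1 0 = 0) (hg20 : g2 0 = 0)
    (hg1d1 : ∀ x > 0, 0 < deriv g1 x) (hg2d1 : ∀ x > 0, 0 < deriv g2 x)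
    (hg1d2 : ∀ x > 0, 0 < iteratedDeriv 2 g1 x) (hg2d2 : ∀ x > 0, 0 < iteratedDeriv 2 g2 x)
    (hg1d3 : ∀ x > 0, 0 ≤ iteratedDeriv 3 g1 x) (hg2d3 : ∀ x > 0, 0 ≤ iteratedDeriv 3 g2 x)
    (n : ℕ) (hn : 2 ≤ n) (h : ℝ) (hh : h = 1 / ((n : ℝ) - 1))
    (α : ℝ) (hα : 0 < α) (u : ℕ → ℝ)
    (hsol : IsSolution g1 g2 n h α u)
    (hU : ∀ k, 1 ≤ k → k ≤ n → u k = U g1 h k (u 1))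
    (hdec : StrictAntiOn (fun x => g1 x / g2 x) (Set.Ioi 0)) :
    IsUnit (Jac g1 g2 n h α u) ∧
    ∀ i j : Fin n,
      (Jac g1 g2 n h α u)⁻¹ i j =
        (∑ k ∈ Finset.Icc (max ((i : ℕ) + 1) ((j : ℕ) + 1)) (n - 1),
          deriv (U g1 h ((i : ℕ) + 1)) (u 1) * deriv (U g1 h ((j : ℕ) + 1)) (u 1) /
            (deriv (U g1 h k) (u 1) * deriv (U g1 h (k + 1)) (u 1))) +
        deriv (U g1 h ((i : ℕ) + 1)) (u 1) * deriv (U g1 h ((j : ℕ) + 1)) (u 1) /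
          (deriv (U g1 h n) (u 1) * (Jac g1 g2 n h α u).det) := by
  have hg1diff : Differentiable ℝ g1 := hg1C.differentiable (by norm_num)
  have hg2diff : Differentiable ℝ g2 := hg2C.differentiable (by norm_num)
  have hun : 0 < u n := hsol.1 n (by omega) le_rfl
  have hg2n : 0 < g2 (u n) := pos_of_deriv_pos g2 hg2diff hg20 hg2d1 hun
  have hquot : deriv g1 (u n) * g2 (u n) ≤ g1 (u n) * deriv g2 (u n) :=
    quot_deriv_le g1 g2 hg1diff hg2diff (u n) hun hg2n.ne' hdec
  have hposg1 : ∀ x > 0, 0 < g1 x := fun x hx => pos_of_deriv_pos g1 hg1diff hg10 hg1d1 hx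
  have hposg2 : ∀ x > 0, 0 < g2 x := fun x hx => pos_of_deriv_pos g2 hg2diff hg20 hg2d1 hx
  have hmono : StrictMonoOn (deriv g1) (Set.Ici 0) := deriv_strictMono g1 hg1C hg1d2
  have hconv : ∀ x y : ℝ, 0 < x → x ≤ y → g1 y - g1 x ≤ deriv g1 y * (y - x) :=
    fun x y hx hxy => convex_ineq g1 hg1C hg1d2 hx hxy
  obtain ⟨hvpos, hdneg⟩ := seq_main g1 g2 hg1C hg2C hg10 hg20 hg1d1 hg2d1 hg1d2 n hn h hh
    α hα u hsol hU hdec hquot hposg1 hposg2 hmono hconv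
  set vd : ℕ → ℝ := fun k => dU g1 h k (u 1) with hvd_def
  set d : ℝ := (1 + h ^ 2 / 2 * deriv g1 (u n) - h * α * deriv g2 (u n)) * vd n - vd (n - 1)
    with hd_def
  have hd0 : d ≠ 0 := ne_of_lt hdneg
  have hv1 : vd 1 = 1 := rfl
  have hG1 : 1 + h ^ 2 / 2 * deriv g1 (u 1) = vd 2 := rfl
  have hGs : ∀ s, 2 ≤ s → s ≤ n - 1 →
      (2 + h ^ 2 * deriv g1 (u s)) * vd s = vd (s - 1) + vd (s + 1) := by
    intro s hs2 hsn
    obtain ⟨t, rfl⟩ : ∃ t, s = t + 2 := ⟨s - 2, by omega⟩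
    have hrec := dU_rec g1 h (u 1) (t + 1) (by omega)
    rw [show t + 1 + 2 = t + 2 + 1 from by omega, show t + 1 + 1 = t + 2 from by omega] at hrec
    rw [← hU (t + 2) (by omega) (by omega)] at hrec
    rw [show t + 2 - 1 = t + 1 from by omega]
    show (2 + h ^ 2 * deriv g1 (u (t + 2))) * dU g1 h (t + 2) (u 1)
      = dU g1 h (t + 1) (u 1) + dU g1 h (t + 2 + 1) (u 1)
    rw [hrec]
    ring
  have hd' : (1 + h ^ 2 / 2 * deriv g1 (u n) - h * α * deriv g2 (u n)) * vd n - vd (n - 1)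
      = d := rfl
  have hJM : Jac g1 g2 n h α u * invM vd d n = 1 :=
    Jac_mul_invM g1 g2 n h α u vd d hn hv1 hvpos hG1 hGs hd' hd0
  have hdet : (Jac g1 g2 n h α u).det = d :=
    Jac_det g1 g2 n h α u vd d hn hv1 hvpos hG1 hGs hd'
  have hunit : IsUnit (Jac g1 g2 n h α u) :=
    ⟨⟨Jac g1 g2 n h α u, invM vd d n, hJM, mul_eq_one_comm.mp hJM⟩, rfl⟩
  have hinv : (Jac g1 g2 n h α u)⁻¹ = invM vd d n := Matrix.inv_eq_right_inv hJM
  refine ⟨hunit, fun i j => ?_⟩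
  rw [hinv, hdet]
  have hder : ∀ k : ℕ, deriv (U g1 h k) (u 1) = vd k :=
    fun k => deriv_U g1 hg1diff h (u 1) k
  simp only [hder]
  simp only [invM, Matrix.of_apply, mul_add, Finset.mul_sum, mul_one_div]
end seqs
end

section
/- Assume the function g := g₁/g₂ is surjective from (0, ∞) onto (0, ∞) and satisfies g'(x) < 0 for all x > 0, and let 0 < α_* < α^* be given. Then there exists a constant κ₁ > 0 depending only on α_*, α^*, g₁ and g₂ (in particular independent of n and h) such that for every integer n ≥ 2 and every α ∈ I := [α_*, α^*], the map φ sending α to the unique positive solution of the discrete system (S) with parameter α satisfies ‖φ'(α)‖_∞ < κ₁, where ‖·‖_∞ denotes the maximum norm on ℝⁿ; consequently κ := max{‖φ'(α)‖_∞ : α ∈ I} < κ₁. -/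
open Finset

noncomputable def W (g1 : ℝ → ℝ) (h : ℝ) : ℕ → ℝ → ℝ
  | 0, _ => 1
  | 1, _ => 1
  | 2, u => 1 + h ^ 2 / 2 * deriv g1 u
  | k + 3, u => 2 * W g1 h (k + 2) u - W g1 h (k + 1) u
      + h ^ 2 * deriv g1 (U g1 h (k + 2) u) * W g1 h (k + 2) u

lemma hasDerivAt_U (g1 : ℝ → ℝ) (hg1 : Differentiable ℝ g1) (h : ℝ) (k : ℕ) (u : ℝ) :
    HasDerivAt (U g1 h k) (W g1 h k u) u := by
  induction k using Nat.strong_induction_on with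
  | _ k ih =>
    match k with
    | 0 => simpa [U, W] using (hasDerivAt_id' u)
    | 1 => simpa [U, W] using (hasDerivAt_id' u)
    | 2 =>
      have : HasDerivAt (fun u => u + h ^ 2 / 2 * g1 u)
          (1 + h ^ 2 / 2 * deriv g1 u) u :=
        (hasDerivAt_id u).add (((hg1 u).hasDerivAt).const_mul (h ^ 2 / 2))
      simpa [U, W] using this
    | (k + 3) =>
      have h2 : HasDerivAt (U g1 h (k + 2)) (W g1 h (k + 2) u) u := ih _ (by omega)
      have h1 : HasDerivAt (U g1 h (k + 1)) (W g1 h (k + 1) u) u := ih _ (by omega)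
      have hc : HasDerivAt (fun v => g1 (U g1 h (k + 2) v))
          (deriv g1 (U g1 h (k + 2) u) * W g1 h (k + 2) u) u :=
        (hg1 (U g1 h (k + 2) u)).hasDerivAt.comp u h2
      have : HasDerivAt (fun v => 2 * U g1 h (k + 2) v - U g1 h (k + 1) v
          + h ^ 2 * g1 (U g1 h (k + 2) v))
          (2 * W g1 h (k + 2) u - W g1 h (k + 1) u
          + h ^ 2 * (deriv g1 (U g1 h (k + 2) u) * W g1 h (k + 2) u)) u :=
        ((h2.const_mul 2).sub h1).add (hc.const_mul (h ^ 2))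
      have heq : U g1 h (k + 3) = fun v => 2 * U g1 h (k + 2) v - U g1 h (k + 1) v
          + h ^ 2 * g1 (U g1 h (k + 2) v) := by
        funext v; simp [U]
      rw [heq]
      convert this using 1
      simp [W]; ring

/-- tangent line inequality for convex-ish functions -/
lemma tangent_le (f : ℝ → ℝ) (hf : Differentiable ℝ f) (hc : Continuous f)
    (hmono : MonotoneOn (deriv f) (Set.Ici 0)) {x y : ℝ} (hx : 0 ≤ x) (hy : 0 ≤ y) :
    f x + deriv f x * (y - x) ≤ f y := by
  rcases lt_trichotomy x y with hlt | heq | hgt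
  · obtain ⟨c, hc1, hc2⟩ := exists_hasDerivAt_eq_slope f (deriv f) hlt
      (hc.continuousOn) (fun z _ => (hf z).hasDerivAt)
    have hcx : deriv f x ≤ deriv f c := hmono hx (le_trans hx (le_of_lt hc1.1)) hc1.1.le
    have : f y - f x = deriv f c * (y - x) := by
      rw [hc2, div_mul_cancel₀ _ (sub_ne_zero.2 hlt.ne')]
    nlinarith
  · simp [heq]
  · obtain ⟨c, hc1, hc2⟩ := exists_hasDerivAt_eq_slope f (deriv f) hgt
      (hc.continuousOn) (fun z _ => (hf z).hasDerivAt)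
    have hcx : deriv f c ≤ deriv f x := hmono (le_trans hy (le_of_lt hc1.1)) hx hc1.2.le
    have : f x - f y = deriv f c * (x - y) := by
      rw [hc2, div_mul_cancel₀ _ (sub_ne_zero.2 hgt.ne')]
    nlinarith

lemma U_rec (g1 : ℝ → ℝ) (h u : ℝ) (k : ℕ) (hk : 1 ≤ k) :
    U g1 h (k + 2) u = 2 * U g1 h (k + 1) u - U g1 h k u + h ^ 2 * g1 (U g1 h (k + 1) u) := by
  obtain ⟨m, rfl⟩ : ∃ m, k = m + 1 := ⟨k - 1, by omega⟩
  show U g1 h (m + 3) u = _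
  simp [U]

lemma W_rec (g1 : ℝ → ℝ) (h u : ℝ) (k : ℕ) (hk : 1 ≤ k) :
    W g1 h (k + 2) u = 2 * W g1 h (k + 1) u - W g1 h k u
      + h ^ 2 * deriv g1 (U g1 h (k + 1) u) * W g1 h (k + 1) u := by
  obtain ⟨m, rfl⟩ : ∃ m, k = m + 1 := ⟨k - 1, by omega⟩
  show W g1 h (m + 3) u = _
  simp [W]

section main
variable {g1 : ℝ → ℝ} {h s : ℝ} {n : ℕ}

lemma L1 (hh : 0 < h) (hn : 2 ≤ n)
    (hpos : ∀ j, 1 ≤ j → j ≤ n → 0 < U g1 h j s)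
    (hg1pos : ∀ x : ℝ, 0 < x → 0 < g1 x)
    (hg1mono : MonotoneOn g1 (Set.Ici 0)) :
    ∀ k, 1 ≤ k → k ≤ n - 1 →
      s ≤ U g1 h k s ∧
      h ^ 2 * ((k : ℝ) - 1 / 2) * g1 s ≤ U g1 h (k + 1) s - U g1 h k s ∧
      U g1 h (k + 1) s - U g1 h k s ≤ h ^ 2 * ((k : ℝ) - 1 / 2) * g1 (U g1 h k s) := by
  have hs : 0 < s := by simpa [U] using hpos 1 le_rfl (by omega)
  intro k hk
  induction k, hk using Nat.le_induction with
  | base =>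
    intro _
    refine ⟨by simp [U], ?_, ?_⟩ <;> · simp [U]; ring_nf; norm_num
  | succ k hk ih =>
    intro hk1
    have ih := ih (by omega)
    obtain ⟨ih1, ih2, ih3⟩ := ih
    have hku : k ≤ n := by omega
    have posk : 0 < U g1 h k s := hpos k hk hku
    have posk1 : 0 < U g1 h (k + 1) s := hpos (k + 1) (by omega) (by omega)
    have hrec := U_rec g1 h s k hk
    have hg1s : 0 < g1 s := hg1pos s hs
    have hkc : (1 : ℝ) ≤ (k : ℝ) := by exact_mod_cast hk
    have hdpos : 0 < h ^ 2 * ((k : ℝ) - 1 / 2) * g1 s := by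
      have : (0:ℝ) < (k : ℝ) - 1/2 := by linarith
      positivity
    have huk1 : U g1 h k s ≤ U g1 h (k + 1) s := by linarith
    have hmono1 : g1 s ≤ g1 (U g1 h (k + 1) s) :=
      hg1mono (le_of_lt hs) (by simp; positivity) (by linarith)
    have hmono2 : g1 (U g1 h k s) ≤ g1 (U g1 h (k + 1) s) :=
      hg1mono posk.le posk1.le huk1
    refine ⟨by linarith, ?_, ?_⟩
    · push_cast
      nlinarith [sq_nonneg h]
    · push_cast
      nlinarith [sq_nonneg h]
end main

section main2
variable {g1 : ℝ → ℝ} {h s : ℝ} {n : ℕ}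

lemma d_nonneg (hh : 0 < h) (hn : 2 ≤ n)
    (hpos : ∀ j, 1 ≤ j → j ≤ n → 0 < U g1 h j s)
    (hg1pos : ∀ x : ℝ, 0 < x → 0 < g1 x)
    (hg1mono : MonotoneOn g1 (Set.Ici 0)) :
    ∀ k, 1 ≤ k → k ≤ n - 1 → 0 ≤ U g1 h (k + 1) s - U g1 h k s := by
  intro k hk hk1
  have hs : 0 < s := by simpa [U] using hpos 1 le_rfl (by omega)
  have := (L1 hh hn hpos hg1pos hg1mono k hk hk1).2.1
  have hkc : (1 : ℝ) ≤ (k : ℝ) := by exact_mod_cast hk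
  have h0 : 0 < h ^ 2 * ((k : ℝ) - 1 / 2) * g1 s := by
    have h1 : (0:ℝ) < (k : ℝ) - 1/2 := by linarith
    have h2 := hg1pos s hs
    positivity
  linarith

lemma u_mono (hh : 0 < h) (hn : 2 ≤ n)
    (hpos : ∀ j, 1 ≤ j → j ≤ n → 0 < U g1 h j s)
    (hg1pos : ∀ x : ℝ, 0 < x → 0 < g1 x)
    (hg1mono : MonotoneOn g1 (Set.Ici 0)) :
    ∀ j k, 1 ≤ j → j ≤ k → k ≤ n → U g1 h j s ≤ U g1 h k s := by
  intro j k hj hjk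
  induction k, hjk using Nat.le_induction with
  | base => intro _; exact le_rfl
  | succ k hk ih =>
    intro hk1
    have h1 := ih (by omega)
    have h2 := d_nonneg hh hn hpos hg1pos hg1mono k (by omega) (by omega)
    linarith

lemma L3 (hh : 0 < h) (hn : 2 ≤ n)
    (hpos : ∀ j, 1 ≤ j → j ≤ n → 0 < U g1 h j s)
    (hg1pos : ∀ x : ℝ, 0 < x → 0 < g1 x)
    (hg1mono : MonotoneOn g1 (Set.Ici 0)) :
    ∀ k, 1 ≤ k → k ≤ n - 1 →
      U g1 h (k + 1) s - s ≤ (k : ℝ) * (U g1 h (k + 1) s - U g1 h k s) := by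
  intro k hk
  induction k, hk using Nat.le_induction with
  | base => intro _; simp [U]
  | succ k hk ih =>
    intro hk1
    have ih := ih (by omega)
    have hrec := U_rec g1 h s k hk
    have posk1 : 0 < U g1 h (k + 1) s := hpos (k + 1) (by omega) (by omega)
    have hg1k1 : 0 < g1 (U g1 h (k + 1) s) := hg1pos _ posk1
    have hdmono : U g1 h (k + 1) s - U g1 h k s ≤ U g1 h (k + 2) s - U g1 h (k + 1) s := by
      nlinarith [sq_nonneg h]
    have hkc : (0 : ℝ) ≤ (k : ℝ) := by positivity
    push_cast
    nlinarith

lemma WL (hh : 0 < h) (hn : 2 ≤ n)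
    (hpos : ∀ j, 1 ≤ j → j ≤ n → 0 < U g1 h j s)
    (hg1d : ∀ x : ℝ, 0 < x → 0 < deriv g1 x) :
    ∀ k, 1 ≤ k → k ≤ n - 1 → 1 ≤ W g1 h k s ∧ W g1 h k s ≤ W g1 h (k + 1) s := by
  have hs : 0 < s := by simpa [U] using hpos 1 le_rfl (by omega)
  intro k hk
  induction k, hk using Nat.le_induction with
  | base =>
    intro _
    have := hg1d s hs
    constructor
    · simp [W]
    · show (W g1 h 1 s ≤ W g1 h 2 s)
      simp [W]
      positivity
  | succ k hk ih =>
    intro hk1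
    obtain ⟨ih1, ih2⟩ := ih (by omega)
    have posk1 : 0 < U g1 h (k + 1) s := hpos (k + 1) (by omega) (by omega)
    have hq : 0 < deriv g1 (U g1 h (k + 1) s) := hg1d _ posk1
    have hrec := W_rec g1 h s k hk
    have hnn : 0 ≤ h ^ 2 * deriv g1 (U g1 h (k + 1) s) * W g1 h (k + 1) s :=
      mul_nonneg (mul_nonneg (sq_nonneg h) hq.le) (by linarith)
    constructor
    · linarith
    · rw [hrec]; linarith

lemma W_one_le (hh : 0 < h) (hn : 2 ≤ n)
    (hpos : ∀ j, 1 ≤ j → j ≤ n → 0 < U g1 h j s)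
    (hg1d : ∀ x : ℝ, 0 < x → 0 < deriv g1 x) :
    ∀ k, 1 ≤ k → k ≤ n → 1 ≤ W g1 h k s := by
  intro k hk hkn
  rcases Nat.lt_or_ge k n with hlt | hge
  · exact (WL hh hn hpos hg1d k hk (by omega)).1
  · have h1 := WL hh hn hpos hg1d (n - 1) (by omega) (by omega)
    have e : n - 1 + 1 = n := by omega
    rw [e] at h1
    have hkn' : k = n := by omega
    rw [hkn']
    linarith [h1.1, h1.2]

lemma W_mono (hh : 0 < h) (hn : 2 ≤ n)
    (hpos : ∀ j, 1 ≤ j → j ≤ n → 0 < U g1 h j s)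
    (hg1d : ∀ x : ℝ, 0 < x → 0 < deriv g1 x) :
    ∀ j k, 1 ≤ j → j ≤ k → k ≤ n → W g1 h j s ≤ W g1 h k s := by
  intro j k hj hjk
  induction k, hjk using Nat.le_induction with
  | base => intro _; exact le_rfl
  | succ k hk ih =>
    intro hk1
    have h1 := ih (by omega)
    have h2 := (WL hh hn hpos hg1d k (by omega) (by omega)).2
    linarith

lemma L4 (hh : 0 < h) (hn : 2 ≤ n)
    (hpos : ∀ j, 1 ≤ j → j ≤ n → 0 < U g1 h j s)
    (hg1pos : ∀ x : ℝ, 0 < x → 0 < g1 x)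
    (hg1mono : MonotoneOn g1 (Set.Ici 0))
    (hg1d : ∀ x : ℝ, 0 < x → 0 < deriv g1 x)
    (htan : ∀ x y : ℝ, 0 ≤ x → 0 ≤ y → g1 x + deriv g1 x * (y - x) ≤ g1 y) :
    ∀ k, 1 ≤ k → k ≤ n - 1 →
      W g1 h (k + 1) s * g1 (U g1 h k s) ≤ W g1 h k s * g1 (U g1 h (k + 1) s) := by
  have hs : 0 < s := by simpa [U] using hpos 1 le_rfl (by omega)
  intro k hk
  induction k, hk using Nat.le_induction with
  | base =>
    intro _
    have hg1s : 0 < g1 s := hg1pos s hs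
    have h2 : 0 ≤ s + h ^ 2 / 2 * g1 s := by positivity
    have := htan s (s + h ^ 2 / 2 * g1 s) hs.le h2
    show W g1 h 2 s * g1 (U g1 h 1 s) ≤ W g1 h 1 s * g1 (U g1 h 2 s)
    simp only [U, W]
    nlinarith
  | succ k hk ih =>
    intro hk1
    have ih := ih (by omega)
    have posk : 0 < U g1 h k s := hpos k hk (by omega)
    have posk1 : 0 < U g1 h (k + 1) s := hpos (k + 1) (by omega) (by omega)
    have posk2 : 0 ≤ U g1 h (k + 2) s := by
      have hd := d_nonneg hh hn hpos hg1pos hg1mono (k + 1) (by omega) hk1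
      linarith
    have hurec := U_rec g1 h s k hk
    have hwrec := W_rec g1 h s k hk
    have htan1 := htan (U g1 h (k + 1) s) (U g1 h (k + 2) s) posk1.le posk2
    have htan2 := htan (U g1 h (k + 1) s) (U g1 h k s) posk1.le posk.le
    have hW1 : 1 ≤ W g1 h (k + 1) s := W_one_le hh hn hpos hg1d (k + 1) (by omega) (by omega)
    -- B : g1(u_{k+2}) + g1(u_k) - 2 g1(u_{k+1}) ≥ h² g1'(u_{k+1}) g1(u_{k+1})
    have hB : h ^ 2 * deriv g1 (U g1 h (k + 1) s) * g1 (U g1 h (k + 1) s)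
        ≤ g1 (U g1 h (k + 2) s) + g1 (U g1 h k s) - 2 * g1 (U g1 h (k + 1) s) := by
      have e2 : h ^ 2 * g1 (U g1 h (k + 1) s)
          = U g1 h (k + 2) s + U g1 h k s - 2 * U g1 h (k + 1) s := by linarith
      have e3 : h ^ 2 * deriv g1 (U g1 h (k + 1) s) * g1 (U g1 h (k + 1) s)
          = deriv g1 (U g1 h (k + 1) s)
            * (U g1 h (k + 2) s + U g1 h k s - 2 * U g1 h (k + 1) s) := by
        rw [← e2]; ring
      rw [e3]
      nlinarith [htan1, htan2]
    rw [hwrec]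
    nlinarith [mul_le_mul_of_nonneg_left hB (by linarith : (0:ℝ) ≤ W g1 h (k + 1) s)]
end main2

set_option maxHeartbeats 1000000 in
theorem stmt19
    (g1 g2 : ℝ → ℝ)
    (hg1C : ContDiff ℝ 3 g1) (hg2C : ContDiff ℝ 3 g2)
    (hg1A : AnalyticAt ℝ g1 0) (hg2A : AnalyticAt ℝ g2 0)
    (hg10 : g1 0 = 0) (hg20 : g2 0 = 0)
    (hg1d1 : ∀ x > 0, 0 < deriv g1 x) (hg2d1 : ∀ x > 0, 0 < deriv g2 x)
    (hg1d2 : ∀ x > 0, 0 < iteratedDeriv 2 g1 x) (hg2d2 : ∀ x > 0, 0 < iteratedDeriv 2 g2 x)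
    (hg1d3 : ∀ x > 0, 0 ≤ iteratedDeriv 3 g1 x) (hg2d3 : ∀ x > 0, 0 ≤ iteratedDeriv 3 g2 x)
    (hsurj : ∀ y > (0 : ℝ), ∃ x > (0 : ℝ), g1 x / g2 x = y)
    (hdec : ∀ x > (0 : ℝ), deriv (fun y => g1 y / g2 y) x < 0)
    (αs αe : ℝ) (hαs : 0 < αs) (hαse : αs < αe) :
    ∃ κ1 > (0 : ℝ), ∀ (n : ℕ), 2 ≤ n → ∀ u1fun : ℝ → ℝ,
      (∀ α ∈ Set.Icc αs αe, 0 < u1fun α ∧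
        IsSolution g1 g2 n (1 / ((n : ℝ) - 1)) α
          (fun k => U g1 (1 / ((n : ℝ) - 1)) k (u1fun α))) →
      ∀ α ∈ Set.Icc αs αe,
        ‖deriv (fun β => fun k : Fin n =>
            U g1 (1 / ((n : ℝ) - 1)) ((k : ℕ) + 1) (u1fun β)) α‖ < κ1 := by
  -- basic smoothness facts
  have hg1diff : Differentiable ℝ g1 := hg1C.differentiable (by norm_num)
  have hg2diff : Differentiable ℝ g2 := hg2C.differentiable (by norm_num)
  have hg1dc : Continuous (deriv g1) := hg1C.continuous_deriv (by norm_num)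
  have hg2dc : Continuous (deriv g2) := hg2C.continuous_deriv (by norm_num)
  have hg1smono : StrictMonoOn g1 (Set.Ici 0) := by
    apply strictMonoOn_of_deriv_pos (convex_Ici 0) hg1C.continuous.continuousOn
    intro x hx; rw [interior_Ici] at hx; exact hg1d1 x hx
  have hg2smono : StrictMonoOn g2 (Set.Ici 0) := by
    apply strictMonoOn_of_deriv_pos (convex_Ici 0) hg2C.continuous.continuousOn
    intro x hx; rw [interior_Ici] at hx; exact hg2d1 x hx
  have hg1pos : ∀ x : ℝ, 0 < x → 0 < g1 x := by
    intro x hx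
    have := hg1smono (Set.self_mem_Ici) (Set.mem_Ici.2 hx.le) hx
    rwa [hg10] at this
  have hg2pos : ∀ x : ℝ, 0 < x → 0 < g2 x := by
    intro x hx
    have := hg2smono (Set.self_mem_Ici) (Set.mem_Ici.2 hx.le) hx
    rwa [hg20] at this
  have hit : iteratedDeriv 2 g1 = deriv (deriv g1) := by
    rw [iteratedDeriv_succ, iteratedDeriv_one]
  have hg1dmono : StrictMonoOn (deriv g1) (Set.Ici 0) := by
    apply strictMonoOn_of_deriv_pos (convex_Ici 0) hg1dc.continuousOn
    intro x hx; rw [interior_Ici] at hx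
    have := hg1d2 x hx; rwa [hit] at this
  have htan : ∀ x y : ℝ, 0 ≤ x → 0 ≤ y → g1 x + deriv g1 x * (y - x) ≤ g1 y :=
    fun x y hx hy => tangent_le g1 hg1diff hg1C.continuous hg1dmono.monotoneOn hx hy
  -- the quantity  g1 g2' - g1' g2  is positive on (0,∞)
  have hQpos : ∀ x : ℝ, 0 < x → 0 < deriv g2 x * g1 x - deriv g1 x * g2 x := by
    intro x hx
    have hg2x : g2 x ≠ 0 := (hg2pos x hx).ne'
    have hd : deriv (fun y => g1 y / g2 y) x
        = (deriv g1 x * g2 x - g1 x * deriv g2 x) / (g2 x) ^ 2 :=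
      deriv_div (hg1diff x) (hg2diff x) hg2x
    have hneg := hdec x hx
    rw [hd] at hneg
    have hb : (0:ℝ) < (g2 x) ^ 2 := by positivity
    by_contra hc
    push_neg at hc
    have h1 : 0 ≤ deriv g1 x * g2 x - g1 x * deriv g2 x := by nlinarith
    have := div_nonneg h1 hb.le
    linarith
  -- g is strictly decreasing on (0,∞)
  have hganti : StrictAntiOn (fun x => g1 x / g2 x) (Set.Ioi 0) := by
    apply strictAntiOn_of_deriv_neg (convex_Ioi 0)
    · exact ContinuousOn.div hg1C.continuous.continuousOn hg2C.continuous.continuousOn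
        (fun x hx => (hg2pos x hx).ne')
    · intro x hx; rw [interior_Ioi] at hx; exact hdec x hx
  -- choice of M, m
  obtain ⟨M, hM0, hMg⟩ := hsurj (αs / 2) (by positivity)
  set L := deriv g1 M with hLdef
  have hL : 0 < L := hg1d1 M hM0
  obtain ⟨m, hm0, hmg⟩ := hsurj ((1 + L) * αe + 1) (by nlinarith)
  have hmM : m < M := by
    by_contra hc
    push_neg at hc
    have := hganti.antitoneOn (Set.mem_Ioi.2 hM0) (Set.mem_Ioi.2 hm0) hc
    try simp only at this
    rw [hmg, hMg] at this
    nlinarith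
  -- the bounding function and its maximum
  set F : ℝ → ℝ := fun x => g1 x * g2 x / (deriv g2 x * g1 x - deriv g1 x * g2 x) with hFdef
  have hFcont : ContinuousOn F (Set.Icc m M) := by
    apply ContinuousOn.div
    · exact (hg1C.continuous.mul hg2C.continuous).continuousOn
    · exact ((hg2dc.mul hg1C.continuous).sub (hg1dc.mul hg2C.continuous)).continuousOn
    · intro x hx
      exact (hQpos x (lt_of_lt_of_le hm0 hx.1)).ne'
  obtain ⟨z, hzmem, hzmax'⟩ := isCompact_Icc.exists_isMaxOn
    ⟨m, Set.left_mem_Icc.2 hmM.le⟩ hFcont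
  have hzmax : ∀ y ∈ Set.Icc m M, F y ≤ F z := fun y hy => hzmax' hy
  set B := max (F z) 1 with hBdef
  have hB1 : (1:ℝ) ≤ B := le_max_right _ _
  have hκpos : 0 < B / αs + 1 := by
    have : 0 < B / αs := div_pos (by linarith) hαs
    linarith
  refine ⟨B / αs + 1, hκpos, ?_⟩
  intro n hn u1fun Hsol α hα
  set hr : ℝ := 1 / ((n : ℝ) - 1) with hhrdef
  have hnR : (2:ℝ) ≤ (n:ℝ) := by exact_mod_cast hn
  have hn1 : (1:ℝ) ≤ (n:ℝ) - 1 := by linarith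
  have hrpos : 0 < hr := by rw [hhrdef]; positivity
  have hrle : hr ≤ 1 := by rw [hhrdef, div_le_one (by linarith)]; linarith
  have hrmul : hr * ((n:ℝ) - 1) = 1 := by rw [hhrdef]; field_simp
  obtain ⟨hs0, hpos0, -, -, hbc0⟩ := Hsol α hα
  set s : ℝ := u1fun α with hsdef
  have hpos : ∀ j, 1 ≤ j → j ≤ n → 0 < U g1 hr j s := by
    intro j h1 h2; simpa using hpos0 j h1 h2
  have hg1m : MonotoneOn g1 (Set.Ici 0) := hg1smono.monotoneOn
  by_cases hdiff : DifferentiableAt ℝ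
      (fun β => fun k : Fin n => U g1 hr ((k : ℕ) + 1) (u1fun β)) α
  swap
  · rw [deriv_zero_of_not_differentiableAt hdiff, norm_zero]; exact hκpos
  have hψ : DifferentiableAt ℝ u1fun α := by
    have h0 : u1fun = fun β =>
        (fun k : Fin n => U g1 hr ((k : ℕ) + 1) (u1fun β)) ⟨0, by omega⟩ := rfl
    rw [h0]
    exact (ContinuousLinearMap.proj (R := ℝ) (φ := fun _ : Fin n => ℝ)
      (⟨0, by omega⟩ : Fin n)).differentiableAt.comp α hdiff
  set ψ' := deriv u1fun α with hψdef
  have hψd : HasDerivAt u1fun ψ' α := hψ.hasDerivAt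
  have hcomp : ∀ k : ℕ, HasDerivAt (fun β => U g1 hr k (u1fun β)) (W g1 hr k s * ψ') α :=
    fun k => (hasDerivAt_U g1 hg1diff hr k s).comp α hψd
  have hFd : HasDerivAt (fun β => fun k : Fin n => U g1 hr ((k : ℕ) + 1) (u1fun β))
      (fun k : Fin n => W g1 hr ((k : ℕ) + 1) s * ψ') α :=
    hasDerivAt_pi.2 (fun i => hcomp ((i : ℕ) + 1))
  have hderivF := hFd.deriv
  rw [hderivF]
  -- abbreviations
  have hbc : U g1 hr n s - U g1 hr (n-1) s + hr^2/2 * g1 (U g1 hr n s)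
      = hr * α * g2 (U g1 hr n s) := by simpa using hbc0
  set un := U g1 hr n s with hundef
  set un1 := U g1 hr (n-1) s with hun1def
  set Wn := W g1 hr n s with hWndef
  set Wn1 := W g1 hr (n-1) s with hWn1def
  have e1 : n - 1 + 1 = n := by omega
  have hunpos : 0 < un := hpos n (by omega) le_rfl
  have hun1pos : 0 < un1 := hpos (n-1) (by omega) (by omega)
  have hspos : 0 < s := hs0
  have hg1un : 0 < g1 un := hg1pos un hunpos
  have hg2un : 0 < g2 un := hg2pos un hunpos
  have hg1s : 0 < g1 s := hg1pos s hspos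
  have hL1 := L1 hrpos hn hpos hg1pos hg1m (n-1) (by omega) le_rfl
  rw [e1] at hL1
  obtain ⟨hs_le, hdlow, hdhigh⟩ := hL1
  have hcast : ((n-1:ℕ):ℝ) = (n:ℝ) - 1 := by
    rw [Nat.cast_sub (by omega : 1 ≤ n), Nat.cast_one]
  have hcoef : hr^2 * (((n-1:ℕ):ℝ) - 1/2) = hr * (1 - hr/2) := by
    rw [hcast]; linear_combination hr * hrmul
  rw [hcoef] at hdlow hdhigh
  have humono : un1 ≤ un := by
    have := u_mono hrpos hn hpos hg1pos hg1m (n-1) n (by omega) (by omega) le_rfl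
    simpa using this
  have hsun : s ≤ un := by
    have := u_mono hrpos hn hpos hg1pos hg1m 1 n (by omega) (by omega) le_rfl
    simpa [U] using this
  have hg1mono_un : g1 un1 ≤ g1 un := hg1m hun1pos.le hunpos.le humono
  have hg1s_le : g1 s ≤ g1 un := hg1m hspos.le hunpos.le hsun
  have hrfac : (0:ℝ) < 1 - hr/2 := by linarith
  -- (i)  α g2(un) ≤ g1(un)
  have hupper : α * g2 un ≤ g1 un := by
    have h2 : un - un1 ≤ hr*(1-hr/2)*g1 un :=
      hdhigh.trans (mul_le_mul_of_nonneg_left hg1mono_un (mul_nonneg hrpos.le hrfac.le))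
    have h3 : hr * (α * g2 un) ≤ hr * g1 un := by linarith only [hbc, h2]
    exact le_of_mul_le_mul_left h3 hrpos
  -- (ii)  g1(s) ≤ α g2(un)
  have hlower : g1 s ≤ α * g2 un := by
    have hp : hr^2/2 * g1 s ≤ hr^2/2 * g1 un :=
      mul_le_mul_of_nonneg_left hg1s_le (by positivity)
    have h3 : hr * g1 s ≤ hr * (α * g2 un) := by linarith only [hbc, hdlow, hp]
    exact le_of_mul_le_mul_left h3 hrpos
  -- (iii)  un - s ≤ α g2(un)
  have hgap : un - s ≤ α * g2 un := by
    have h3 := L3 hrpos hn hpos hg1pos hg1m (n-1) (by omega) le_rfl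
    rw [e1, hcast] at h3
    have hq : (0:ℝ) ≤ hr^2/2 * g1 un := mul_nonneg (by positivity) hg1un.le
    have h4 : un - un1 ≤ hr * α * g2 un := by linarith only [hbc, hq]
    have h5 : ((n:ℝ)-1) * (hr * α * g2 un) = α * g2 un := by
      linear_combination (α * g2 un) * hrmul
    have h6 := mul_le_mul_of_nonneg_left h4 (by linarith : (0:ℝ) ≤ (n:ℝ)-1)
    linarith only [h3, h6, h5]
  -- (iv)  un ≤ M
  have hunM : un ≤ M := by
    by_contra hc
    push_neg at hc
    have hlt := hganti (Set.mem_Ioi.2 hM0) (Set.mem_Ioi.2 hunpos) hc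
    simp only at hlt
    rw [hMg] at hlt
    have hge : αs ≤ g1 un / g2 un := by
      rw [le_div_iff₀ hg2un]
      have := mul_le_mul_of_nonneg_right hα.1 hg2un.le
      linarith only [this, hupper]
    linarith
  -- (v)  m ≤ un
  have hmun : m ≤ un := by
    have htn := htan un s hunpos.le hspos.le
    have hLun : deriv g1 un ≤ L :=
      hg1dmono.monotoneOn hunpos.le (Set.mem_Ici.2 hM0.le) hunM
    have hgund : 0 < deriv g1 un := hg1d1 un hunpos
    have h7 : g1 un ≤ (1 + L) * (α * g2 un) := by
      have p1 := mul_le_mul_of_nonneg_right hLun (by linarith : (0:ℝ) ≤ un - s)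
      have p2 := mul_le_mul_of_nonneg_left hgap hL.le
      linarith only [htn, hlower, p1, p2]
    have h8 : g1 un / g2 un ≤ (1+L)*αe := by
      rw [div_le_iff₀ hg2un]
      have p3 := mul_le_mul_of_nonneg_right hα.2 hg2un.le
      have p4 := mul_le_mul_of_nonneg_left p3 (by linarith : (0:ℝ) ≤ 1 + L)
      linarith only [h7, p4]
    by_contra hc
    push_neg at hc
    have hlt := hganti (Set.mem_Ioi.2 hunpos) (Set.mem_Ioi.2 hm0) hc
    simp only at hlt
    rw [hmg] at hlt
    linarith
  -- (vi)  the denominator estimate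
  have hWr := L4 hrpos hn hpos hg1pos hg1m hg1d1 htan (n-1) (by omega) le_rfl
  rw [e1] at hWr
  have hWn1ge : 1 ≤ Wn1 := W_one_le hrpos hn hpos hg1d1 (n-1) (by omega) (by omega)
  have hWnge : 1 ≤ Wn := W_one_le hrpos hn hpos hg1d1 n (by omega) le_rfl
  have hWmono : Wn1 ≤ Wn := W_mono hrpos hn hpos hg1d1 (n-1) n (by omega) (by omega) le_rfl
  have htn2 := htan un un1 hunpos.le hun1pos.le
  have hDstar : (Wn - Wn1) * g1 un ≤ Wn * (deriv g1 un * (un - un1)) := by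
    have p1 : g1 un - g1 un1 ≤ deriv g1 un * (un - un1) := by
      have : deriv g1 un * (un1 - un) = - (deriv g1 un * (un - un1)) := by ring
      linarith only [htn2, this]
    have p2 := mul_le_mul_of_nonneg_left p1 (by linarith : (0:ℝ) ≤ Wn)
    linarith only [hWr, p2]
  set D := Wn - Wn1 + hr^2/2 * deriv g1 un * Wn - hr * α * deriv g2 un * Wn with hDdef
  have hQn : 0 < deriv g2 un * g1 un - deriv g1 un * g2 un := hQpos un hunpos
  have hDg : D * g1 un ≤ -(hr * α * Wn * (deriv g2 un * g1 un - deriv g1 un * g2 un)) := by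
    have e5 : Wn * deriv g1 un * (hr * α * g2 un)
        = Wn * deriv g1 un * (un - un1 + hr^2/2 * g1 un) := by rw [hbc]
    rw [hDdef]
    linarith only [hDstar, e5]
  have hDneg : D < 0 := by
    have h9 : D * g1 un < 0 := by
      apply lt_of_le_of_lt hDg
      have : 0 < hr * α * Wn * (deriv g2 un * g1 un - deriv g1 un * g2 un) := by
        apply mul_pos
        apply mul_pos
        apply mul_pos hrpos (by linarith [hα.1] : (0:ℝ) < α)
        linarith
        exact hQn
      linarith
    by_contra hc
    push_neg at hc
    have := mul_nonneg hc hg1un.le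
    linarith only [h9, this]
  -- (vii)  the derivative identity from the boundary condition
  have hUnd := hcomp n
  have hUn1d := hcomp (n-1)
  have hgUnd : HasDerivAt (fun β => g1 (U g1 hr n (u1fun β)))
      (deriv g1 un * (Wn * ψ')) α :=
    HasDerivAt.comp α (hg1diff un).hasDerivAt hUnd
  have hg2Und : HasDerivAt (fun β => g2 (U g1 hr n (u1fun β)))
      (deriv g2 un * (Wn * ψ')) α :=
    HasDerivAt.comp α (hg2diff un).hasDerivAt hUnd
  have hmul : HasDerivAt (fun β => hr * β * g2 (U g1 hr n (u1fun β)))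
      (hr * 1 * g2 un + hr * α * (deriv g2 un * (Wn * ψ'))) α :=
    ((hasDerivAt_id α).const_mul hr).mul hg2Und
  have hΦd : HasDerivAt (fun β => U g1 hr n (u1fun β) - U g1 hr (n-1) (u1fun β)
      + hr^2/2 * g1 (U g1 hr n (u1fun β)) - hr * β * g2 (U g1 hr n (u1fun β)))
      (Wn * ψ' - Wn1 * ψ' + hr^2/2 * (deriv g1 un * (Wn * ψ'))
        - (hr * 1 * g2 un + hr * α * (deriv g2 un * (Wn * ψ')))) α :=
    ((hUnd.sub hUn1d).add (hgUnd.const_mul (hr^2/2))).sub hmul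
  have hΦ0 : ∀ β ∈ Set.Icc αs αe, (fun β => U g1 hr n (u1fun β) - U g1 hr (n-1) (u1fun β)
      + hr^2/2 * g1 (U g1 hr n (u1fun β)) - hr * β * g2 (U g1 hr n (u1fun β))) β
      = (fun _ : ℝ => (0:ℝ)) β := by
    intro β hβ
    have hb := (Hsol β hβ).2.2.2.2
    simp only at hb ⊢
    linarith [hb]
  have hud : UniqueDiffWithinAt ℝ (Set.Icc αs αe) α := (uniqueDiffOn_Icc hαse) α hα
  have hc0 : Wn * ψ' - Wn1 * ψ' + hr^2/2 * (deriv g1 un * (Wn * ψ'))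
      - (hr * 1 * g2 un + hr * α * (deriv g2 un * (Wn * ψ'))) = 0 := by
    have h1 := (hΦd.hasDerivWithinAt (s := Set.Icc αs αe)).derivWithin hud
    have h2 := (((hasDerivWithinAt_const α (Set.Icc αs αe) (0:ℝ))).congr hΦ0
      (hΦ0 α hα)).derivWithin hud
    exact h1.symm.trans h2
  have hDψ : D * ψ' = hr * g2 un := by linear_combination hc0
  -- (viii)  conclusion
  have hψneg : ψ' < 0 := by
    by_contra hc
    push_neg at hc
    have p1 := mul_nonpos_of_nonpos_of_nonneg hDneg.le hc
    have p2 := mul_pos hrpos hg2un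
    linarith only [hDψ, p1, p2]
  have hEψ : (-D) * (-ψ') = hr * g2 un := by linear_combination hDψ
  have hEg : hr * α * Wn * (deriv g2 un * g1 un - deriv g1 un * g2 un) ≤ (-D) * g1 un := by
    linarith only [hDg]
  have h6 : hr * (α * (Wn * (deriv g2 un * g1 un - deriv g1 un * g2 un) * (-ψ')))
      ≤ hr * (g1 un * g2 un) := by
    have h61 := mul_le_mul_of_nonneg_right hEg (by linarith : (0:ℝ) ≤ -ψ')
    have h62 : g1 un * ((-D) * (-ψ')) = g1 un * (hr * g2 un) := by rw [hEψ]
    linarith only [h61, h62]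
  have h7 : α * (Wn * (deriv g2 un * g1 un - deriv g1 un * g2 un) * (-ψ'))
      ≤ g1 un * g2 un := le_of_mul_le_mul_left h6 hrpos
  have h8 : Wn * (-ψ') * αs * (deriv g2 un * g1 un - deriv g1 un * g2 un)
      ≤ g1 un * g2 un := by
    have hnn : (0:ℝ) ≤ Wn * (deriv g2 un * g1 un - deriv g1 un * g2 un) * (-ψ') :=
      mul_nonneg (mul_nonneg (by linarith only [hWnge]) hQn.le) (by linarith only [hψneg])
    have p := mul_le_mul_of_nonneg_right hα.1 hnn
    linarith only [h7, p]
  have h9 : Wn * (-ψ') ≤ B / αs := by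
    have hFun : Wn * (-ψ') ≤ F un / αs := by
      rw [le_div_iff₀ hαs, hFdef]
      simp only
      rw [le_div_iff₀ hQn]
      linarith only [h8]
    have hFz : F un ≤ F z := hzmax un ⟨hmun, hunM⟩
    have hd2 : F un / αs ≤ B / αs := by
      gcongr
      exact le_trans hFz (le_max_left _ _)
    linarith
  have hcompb : ∀ i : Fin n, ‖W g1 hr ((i : ℕ) + 1) s * ψ'‖ ≤ B / αs := by
    intro i
    have hi : (i : ℕ) + 1 ≤ n := i.2
    have hW1i : 1 ≤ W g1 hr ((i : ℕ) + 1) s :=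
      W_one_le hrpos hn hpos hg1d1 ((i : ℕ) + 1) (by omega) hi
    have hWi : W g1 hr ((i : ℕ) + 1) s ≤ Wn :=
      W_mono hrpos hn hpos hg1d1 ((i : ℕ) + 1) n (by omega) hi le_rfl
    rw [Real.norm_eq_abs, abs_mul, abs_of_nonneg (by linarith : (0:ℝ) ≤ W g1 hr ((i:ℕ)+1) s),
      abs_of_neg hψneg]
    have p := mul_le_mul_of_nonneg_right hWi (by linarith : (0:ℝ) ≤ -ψ')
    linarith only [p, h9]
  have hnorm : ‖fun k : Fin n => W g1 hr ((k : ℕ) + 1) s * ψ'‖ ≤ B / αs :=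
    (pi_norm_le_iff_of_nonneg (by positivity)).2 hcompb
  linarith
end
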